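/- arXiv:1702.05813 — 5 statements merged into one kernel-verified Lean document; each statement's English description precedes it below -/
import Mathlib

section
/- For every ν > -1/2, the Bessel function J_ν defined by the Poisson representation formula satisfies the Bessel differential equation: for all r > 0, r²·J_ν''(r) + r·J_ν'(r) + (r² − ν²)·J_ν(r) = 0. -/
/-- The Bessel function of order `ν`, defined for `r > 0` by the Poisson
representation formula
`J_ν(r) = (r/2)^ν / (Γ(ν+1/2)·Γ(1/2)) · ∫_{-1}^{1} e^{isr} (1−s²)^{ν−1/2} ds`. -/
noncomputable def besselJ (ν : ℝ) (r : ℝ) : ℂ :=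
  (((r / 2) ^ ν / (Real.Gamma (ν + 1 / 2) * Real.Gamma (1 / 2)) : ℝ) : ℂ) *
    ∫ s in (-1 : ℝ)..(1 : ℝ),
      Complex.exp (Complex.I * (s : ℂ) * (r : ℂ)) * (((1 - s ^ 2) ^ (ν - 1 / 2) : ℝ) : ℂ)

namespace BesselAux

open MeasureTheory Complex Set Filter intervalIntegral

/-- The family of integrals obtained by differentiating the Poisson integral. -/
noncomputable def PB (ν : ℝ) (k : ℕ) (r : ℝ) : ℂ :=
  ∫ s in (-1 : ℝ)..(1 : ℝ),
    (Complex.I * (s : ℂ)) ^ k * Complex.exp (Complex.I * (s : ℂ) * (r : ℂ)) *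
      (((1 - s ^ 2) ^ (ν - 1 / 2) : ℝ) : ℂ)

lemma integrable_core {p : ℝ} (hp : -1 < p) :
    IntervalIntegrable (fun s : ℝ => (1 - s ^ 2) ^ p) volume (-1) 1 := by
  have h01 : IntervalIntegrable (fun s : ℝ => (1 - s ^ 2) ^ p) volume 0 1 := by
    have h1 : IntervalIntegrable (fun s : ℝ => (1 - s) ^ p) volume 0 1 := by
      simpa using ((intervalIntegrable_rpow' (a := 0) (b := 1) hp).comp_sub_left 1).symm
    have h2 : ContinuousOn (fun s : ℝ => (1 + s) ^ p) (Set.uIcc 0 1) := by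
      intro x hx
      rw [Set.uIcc_of_le (by norm_num)] at hx
      exact ((Real.continuousAt_rpow_const (1 + x) p
        (Or.inl (by nlinarith [hx.1]))).comp (by fun_prop)).continuousWithinAt
    have h12 := h1.mul_continuousOn h2
    rw [intervalIntegrable_iff_integrableOn_Ioc_of_le (by norm_num)] at h12 ⊢
    refine h12.congr_fun (fun s hs => ?_) measurableSet_Ioc
    dsimp only
    rw [← Real.mul_rpow (by linarith [hs.2]) (by linarith [hs.1])]
    congr 1; ring
  have hneg : IntervalIntegrable (fun s : ℝ => (1 - s ^ 2) ^ p) volume (-1) 0 := by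
    have h1 : IntervalIntegrable (fun s : ℝ => (1 + s) ^ p) volume (-1) 0 := by
      have := (intervalIntegrable_rpow' (a := 0) (b := 1) hp).comp_add_right 1
      norm_num at this
      simpa [add_comm] using this
    have h2 : ContinuousOn (fun s : ℝ => (1 - s) ^ p) (Set.uIcc (-1) 0) := by
      intro x hx
      rw [Set.uIcc_of_le (by norm_num)] at hx
      exact ((Real.continuousAt_rpow_const (1 - x) p
        (Or.inl (by nlinarith [hx.2]))).comp (by fun_prop)).continuousWithinAt
    have h12 := h1.mul_continuousOn h2
    rw [intervalIntegrable_iff_integrableOn_Ioc_of_le (by norm_num)] at h12 ⊢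
    refine h12.congr_fun (fun s hs => ?_) measurableSet_Ioc
    dsimp only
    rw [← Real.mul_rpow (by linarith [hs.1]) (by linarith [hs.2])]
    congr 1; ring
  exact hneg.trans h01

lemma ofReal_integrable_core {p : ℝ} (hp : -1 < p) :
    IntervalIntegrable (fun s : ℝ => (((1 - s ^ 2) ^ p : ℝ) : ℂ)) volume (-1) 1 := by
  have h := integrable_core hp
  rw [intervalIntegrable_iff] at h ⊢
  exact h.ofReal

lemma integrable_mul_core {p : ℝ} (hp : -1 < p) {g : ℝ → ℂ}
    (hg : Continuous g) :
    IntervalIntegrable (fun s : ℝ => g s * (((1 - s ^ 2) ^ p : ℝ) : ℂ)) volume (-1) 1 :=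
  (ofReal_integrable_core hp).continuousOn_mul hg.continuousOn

lemma integrable_PB (ν : ℝ) (hν : ν > -1/2) (k : ℕ) (r : ℝ) :
    IntervalIntegrable (fun s : ℝ => (Complex.I * (s : ℂ)) ^ k *
      Complex.exp (Complex.I * (s : ℂ) * (r : ℂ)) *
      (((1 - s ^ 2) ^ (ν - 1 / 2) : ℝ) : ℂ)) volume (-1) 1 :=
  integrable_mul_core (by linarith) (by fun_prop)

lemma norm_exp_I_mul (t x : ℝ) : ‖Complex.exp (Complex.I * (t : ℂ) * (x : ℂ))‖ = 1 := by
  rw [Complex.norm_exp]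
  simp

lemma hasDerivAt_PB {ν : ℝ} (hν : ν > -1/2) (k : ℕ) (r : ℝ) :
    HasDerivAt (PB ν k) (PB ν (k + 1) r) r := by
  have hmeas : ∀ x : ℝ, ∀ m : ℕ, AEStronglyMeasurable (fun s : ℝ =>
      (Complex.I * (s : ℂ)) ^ m * Complex.exp (Complex.I * (s : ℂ) * (x : ℂ)) *
      (((1 - s ^ 2) ^ (ν - 1 / 2) : ℝ) : ℂ)) (volume.restrict (Set.uIoc (-1 : ℝ) 1)) := by
    intro x m
    apply Measurable.aestronglyMeasurable
    fun_prop
  have h := intervalIntegral.hasDerivAt_integral_of_dominated_loc_of_deriv_le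
    (F := fun (x : ℝ) s => (Complex.I * (s : ℂ)) ^ k * Complex.exp (Complex.I * (s : ℂ) * (x : ℂ)) *
      (((1 - s ^ 2) ^ (ν - 1 / 2) : ℝ) : ℂ))
    (F' := fun (x : ℝ) s => (Complex.I * (s : ℂ)) ^ (k + 1) *
      Complex.exp (Complex.I * (s : ℂ) * (x : ℂ)) * (((1 - s ^ 2) ^ (ν - 1 / 2) : ℝ) : ℂ))
    (bound := fun s => (1 - s ^ 2) ^ (ν - 1 / 2))
    (s := Metric.ball r 1) (x₀ := r) (a := -1) (b := 1) (μ := volume)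
    (Metric.ball_mem_nhds r one_pos) (Filter.Eventually.of_forall fun x => hmeas x k)
    (integrable_PB ν hν k r) (hmeas r (k + 1)) ?_ (integrable_core (by linarith)) ?_
  · exact h.2
  · refine Filter.Eventually.of_forall fun t ht x _ => ?_
    rw [Set.uIoc_of_le (by norm_num : (-1:ℝ) ≤ 1)] at ht
    have h1 : |t| ≤ 1 := abs_le.mpr ⟨ht.1.le, ht.2⟩
    have h2 : (0:ℝ) ≤ (1 - t ^ 2) ^ (ν - 1/2) :=
      Real.rpow_nonneg (by nlinarith [ht.1, ht.2]) _
    calc ‖(Complex.I * (t:ℂ)) ^ (k+1) * Complex.exp (Complex.I * (t:ℂ) * (x:ℂ)) *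
          (((1 - t ^ 2) ^ (ν - 1 / 2) : ℝ) : ℂ)‖
        = |t| ^ (k+1) * 1 * |(1 - t ^ 2) ^ (ν - 1/2)| := by
          rw [norm_mul, norm_mul, norm_pow, norm_mul, norm_exp_I_mul]
          simp [Complex.norm_real]
      _ ≤ 1 * 1 * ((1 - t ^ 2) ^ (ν - 1/2)) := by
          rw [_root_.abs_of_nonneg h2]
          gcongr
          exact pow_le_one₀ (abs_nonneg t) h1
      _ = (1 - t ^ 2) ^ (ν - 1/2) := by ring
  · refine Filter.Eventually.of_forall fun t ht x _ => ?_
    have he : HasDerivAt (fun x : ℝ => Complex.exp (Complex.I * (t : ℂ) * (x : ℂ)))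
        (Complex.I * (t : ℂ) * Complex.exp (Complex.I * (t : ℂ) * (x : ℂ))) x := by
      have : HasDerivAt (fun z : ℂ => Complex.exp (Complex.I * (t : ℂ) * z))
          (Complex.exp (Complex.I * (t : ℂ) * (x : ℂ)) * (Complex.I * (t : ℂ) * 1)) (x : ℂ) :=
        ((hasDerivAt_id ((x : ℝ) : ℂ)).const_mul (Complex.I * (t : ℂ))).cexp
      simpa [mul_comm] using this.comp_ofReal
    have := (he.const_mul ((Complex.I * (t : ℂ)) ^ k)).mul_const
      (((1 - t ^ 2) ^ (ν - 1 / 2) : ℝ) : ℂ)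
    refine this.congr_deriv ?_
    ring

/-- The key identity coming from integration by parts. -/
lemma key_identity {ν : ℝ} (hν : ν > -1/2) (r : ℝ) :
    (r : ℂ) * (PB ν 0 r + PB ν 2 r) + (2 * (ν:ℂ) + 1) * PB ν 1 r = 0 := by
  have hp : (-1:ℝ) < ν - 1/2 := by linarith
  have hq : (0:ℝ) < ν + 1/2 := by linarith
  set E : ℝ → ℂ := fun s => Complex.exp (Complex.I * (s : ℂ) * (r : ℂ)) with hE
  -- the integral with exponent ν + 1/2
  set W : ℂ := ∫ s in (-1:ℝ)..1, E s * (((1 - s ^ 2) ^ (ν + 1 / 2) : ℝ) : ℂ) with hW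
  set S : ℂ := ∫ s in (-1:ℝ)..1, (s : ℂ) * E s * (((1 - s ^ 2) ^ (ν - 1 / 2) : ℝ) : ℂ) with hS
  have hWint : IntervalIntegrable (fun s : ℝ => E s * (((1 - s ^ 2) ^ (ν + 1 / 2) : ℝ) : ℂ))
      volume (-1) 1 := integrable_mul_core (by linarith) (by fun_prop)
  have hSint : IntervalIntegrable (fun s : ℝ => (s : ℂ) * E s *
      (((1 - s ^ 2) ^ (ν - 1 / 2) : ℝ) : ℂ)) volume (-1) 1 :=
    integrable_mul_core hp (by fun_prop)
  -- continuity of the rpow with positive exponent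
  have hcont : Continuous (fun s : ℝ => (1 - s ^ 2) ^ (ν + 1/2)) := by
    rw [continuous_iff_continuousAt]
    intro x
    exact (Real.continuousAt_rpow_const _ _ (Or.inr hq.le)).comp (by fun_prop)
  -- Step 1 : FTC
  have hFTC : Complex.I * (r:ℂ) * W + (-(2 * (ν:ℂ) + 1)) * S = 0 := by
    have h0 : (∫ s in (-1:ℝ)..1,
        (Complex.I * (r:ℂ) * (E s * (((1 - s ^ 2) ^ (ν + 1 / 2) : ℝ) : ℂ)) +
          (-(2 * (ν:ℂ) + 1)) * ((s : ℂ) * E s * (((1 - s ^ 2) ^ (ν - 1 / 2) : ℝ) : ℂ)))) = 0 := by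
      rw [intervalIntegral.integral_eq_sub_of_hasDerivAt_of_le (by norm_num)
        (f := fun s : ℝ => E s * (((1 - s ^ 2) ^ (ν + 1 / 2) : ℝ) : ℂ))
        ?_ ?_ ((hWint.const_mul _).add (hSint.const_mul _))]
      · norm_num [hE, Real.zero_rpow (ne_of_gt hq)]
      · exact ((by fun_prop : Continuous E).mul
          (Complex.continuous_ofReal.comp hcont)).continuousOn
      · intro s hs
        have hne : (1:ℝ) - s ^ 2 ≠ 0 := by nlinarith [hs.1, hs.2]
        have he : HasDerivAt E (Complex.I * (r:ℂ) * E s) s := by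
          have : HasDerivAt (fun z : ℂ => Complex.exp (Complex.I * z * (r : ℂ)))
              (Complex.exp (Complex.I * (s : ℂ) * (r : ℂ)) * (Complex.I * 1 * (r:ℂ))) (s : ℂ) :=
            (((hasDerivAt_id ((s : ℝ) : ℂ)).const_mul Complex.I).mul_const (r:ℂ)).cexp
          simpa [hE, mul_comm, mul_assoc, mul_left_comm] using this.comp_ofReal
        have hg : HasDerivAt (fun s : ℝ => (1 - s ^ 2) ^ (ν + 1/2))
            ((ν + 1/2) * (1 - s ^ 2) ^ (ν + 1/2 - 1) * (-(2 * s))) s := by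
          have hinner : HasDerivAt (fun s : ℝ => 1 - s ^ 2) (-(2 * s)) s := by
            simpa using ((hasDerivAt_pow 2 s).const_sub 1)
          exact (Real.hasDerivAt_rpow_const (p := ν + 1/2) (Or.inl hne)).comp s hinner
        have := he.mul (hg.ofReal_comp)
        refine this.congr_deriv ?_
        have hexp : (1 - s^2 : ℝ) ^ (ν + 1/2 - 1) = (1 - s^2 : ℝ) ^ (ν - 1/2) := by
          congr 1; ring
        rw [hexp]
        push_cast
        ring
    rw [intervalIntegral.integral_add (hWint.const_mul _) (hSint.const_mul _),
      intervalIntegral.integral_const_mul, intervalIntegral.integral_const_mul] at h0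
    exact h0
  -- Step 2 : PB 0 + PB 2 = W
  have hA : PB ν 0 r + PB ν 2 r = W := by
    rw [PB, PB, ← intervalIntegral.integral_add (integrable_PB ν hν 0 r) (integrable_PB ν hν 2 r)]
    apply intervalIntegral.integral_congr
    intro s hs
    rw [Set.uIcc_of_le (by norm_num : (-1:ℝ) ≤ 1)] at hs
    have ht : (0:ℝ) ≤ 1 - s ^ 2 := by nlinarith [hs.1, hs.2]
    have hmul : ((1 - s^2) ^ (ν - 1/2) : ℝ) * (1 - s^2) = (1 - s^2 : ℝ) ^ (ν + 1/2) := by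
      rcases eq_or_lt_of_le ht with h | h
      · rw [← h, Real.zero_rpow (ne_of_gt hq)]
        ring
      · rw [show ν + 1/2 = (ν - 1/2) + 1 by ring, Real.rpow_add_one (ne_of_gt h)]
    simp only [pow_zero, one_mul]
    have hI2 : (Complex.I * (s:ℂ)) ^ 2 = -((s:ℂ)^2) := by
      rw [mul_pow, Complex.I_sq]; ring
    rw [hI2, ← hmul]
    push_cast
    ring
  -- Step 3 : PB 1 = I * S
  have hP1 : PB ν 1 r = Complex.I * S := by
    rw [PB, hS, ← intervalIntegral.integral_const_mul]
    apply intervalIntegral.integral_congr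
    intro s _
    simp only [pow_one]
    ring
  rw [hA, hP1]
  linear_combination (-Complex.I) * hFTC + ((r:ℂ) * W) * Complex.I_sq

end BesselAux

open BesselAux MeasureTheory Complex Set Filter Topology

/-- For every `ν > -1/2`, the Bessel function `J_ν` satisfies the Bessel
differential equation `r²·J_ν''(r) + r·J_ν'(r) + (r² − ν²)·J_ν(r) = 0` for `r > 0`. -/
theorem besselJ_satisfies_bessel_ODE (ν : ℝ) (hν : ν > -1/2) (r : ℝ) (hr : r > 0) :
    (r : ℂ) ^ 2 * deriv (deriv (besselJ ν)) r + (r : ℂ) * deriv (besselJ ν) r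
      + ((r : ℂ) ^ 2 - (ν : ℂ) ^ 2) * besselJ ν r = 0 := by
  set c : ℝ := (2:ℝ) ^ (-ν) / (Real.Gamma (ν + 1 / 2) * Real.Gamma (1 / 2)) with hc
  -- besselJ agrees with c * x^ν * PB ν 0 x on (0, ∞)
  have hBJ : ∀ x ∈ Set.Ioi (0:ℝ), besselJ ν x = ((c * x ^ ν : ℝ) : ℂ) * PB ν 0 x := by
    intro x hx
    have hcoef : ((x/2) ^ ν / (Real.Gamma (ν + 1 / 2) * Real.Gamma (1 / 2)) : ℝ) = c * x ^ ν := by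
      rw [hc, Real.div_rpow (le_of_lt hx) (by norm_num), Real.rpow_neg (by norm_num)]
      ring
    rw [besselJ, PB, hcoef]
    congr 1
    apply intervalIntegral.integral_congr
    intro s _
    simp
  have hmem : Set.Ioi (0:ℝ) ∈ 𝓝 r := isOpen_Ioi.mem_nhds hr
  -- first derivative
  have hderiv1 : ∀ x ∈ Set.Ioi (0:ℝ),
      HasDerivAt (fun y : ℝ => ((c * y ^ ν : ℝ) : ℂ) * PB ν 0 y)
        (((c * (ν * x ^ (ν - 1)) : ℝ) : ℂ) * PB ν 0 x + ((c * x ^ ν : ℝ) : ℂ) * PB ν 1 x) x := by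
    intro x hx
    have ha : HasDerivAt (fun y : ℝ => c * y ^ ν) (c * (ν * x ^ (ν - 1))) x :=
      (Real.hasDerivAt_rpow_const (Or.inl (ne_of_gt hx))).const_mul c
    exact (ha.ofReal_comp).mul (hasDerivAt_PB hν 0 x)
  set D1 : ℝ → ℂ := fun x =>
    ((c * (ν * x ^ (ν - 1)) : ℝ) : ℂ) * PB ν 0 x + ((c * x ^ ν : ℝ) : ℂ) * PB ν 1 x with hD1
  have heq1 : besselJ ν =ᶠ[𝓝 r] fun y => ((c * y ^ ν : ℝ) : ℂ) * PB ν 0 y :=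
    Filter.eventually_of_mem hmem hBJ
  have heqd : deriv (besselJ ν) =ᶠ[𝓝 r] D1 := by
    apply (heq1.deriv).trans
    exact Filter.eventually_of_mem hmem fun x hx => (hderiv1 x hx).deriv
  -- second derivative
  have hderiv2 : HasDerivAt D1
      (((c * (ν * ((ν - 1) * r ^ (ν - 1 - 1))) : ℝ) : ℂ) * PB ν 0 r +
        ((c * (ν * r ^ (ν - 1)) : ℝ) : ℂ) * PB ν 1 r +
        (((c * (ν * r ^ (ν - 1)) : ℝ) : ℂ) * PB ν 1 r + ((c * r ^ ν : ℝ) : ℂ) * PB ν 2 r)) r := by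
    have ha : HasDerivAt (fun y : ℝ => c * (ν * y ^ (ν - 1)))
        (c * (ν * ((ν - 1) * r ^ (ν - 1 - 1)))) r :=
      (((Real.hasDerivAt_rpow_const (p := ν - 1) (Or.inl (ne_of_gt hr)))).const_mul ν).const_mul c
    have hb : HasDerivAt (fun y : ℝ => c * y ^ ν) (c * (ν * r ^ (ν - 1))) r :=
      (Real.hasDerivAt_rpow_const (Or.inl (ne_of_gt hr))).const_mul c
    exact ((ha.ofReal_comp).mul (hasDerivAt_PB hν 0 r)).add
      ((hb.ofReal_comp).mul (hasDerivAt_PB hν 1 r))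
  have h2 : deriv (deriv (besselJ ν)) r = _ := heqd.deriv_eq.trans hderiv2.deriv
  have h1 : deriv (besselJ ν) r = D1 r := heqd.self_of_nhds
  have h0 : besselJ ν r = ((c * r ^ ν : ℝ) : ℂ) * PB ν 0 r := hBJ r hr
  have K := key_identity hν r
  have e1 : r ^ (ν - 1) = r ^ (ν - 1 - 1) * r := by
    rw [← Real.rpow_add_one (ne_of_gt hr) (ν - 1 - 1)]
    norm_num
  have e0 : r ^ ν = r ^ (ν - 1 - 1) * r * r := by
    rw [← e1, ← Real.rpow_add_one (ne_of_gt hr) (ν - 1)]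
    norm_num
  rw [h2, h1, h0]
  simp only [hD1]
  rw [e1, e0]
  push_cast
  linear_combination ((c:ℂ) * ((r:ℝ) ^ (ν - 1 - 1) : ℝ) * (r:ℂ)^3) * K
end

section
/- For every ν > -1/2, the Bessel function defined by the Poisson representation formula satisfies the recursion relation: for all t > 0, d/dt ( t^{-ν} J_ν(t) ) = − t^{-ν} J_{ν+1}(t). -/
open MeasureTheory intervalIntegral Real Set Filter

namespace BesselAux

/-- Integrability of `(1-s²)^μ` on `[-1,1]` for `μ > -1`. -/
lemma aux_integrable {μ : ℝ} (hμ : -1 < μ) :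
    IntervalIntegrable (fun s : ℝ => (1 - s ^ 2) ^ μ) volume (-1) 1 := by
  have h1 : IntervalIntegrable (fun s : ℝ => (1 - s) ^ μ) volume (-1) 1 := by
    have := ((intervalIntegrable_rpow' (a := 0) (b := 2) hμ).comp_sub_left 1).symm
    norm_num at this
    exact this
  have h2 : IntervalIntegrable (fun s : ℝ => (1 + s) ^ μ) volume (-1) 1 := by
    have := (intervalIntegrable_rpow' (a := 0) (b := 2) hμ).comp_sub_right (-1)
    have heq : (fun x : ℝ => (x - -1) ^ μ) = fun s : ℝ => (1 + s) ^ μ := by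
      funext x; rw [sub_neg_eq_add, add_comm]
    rw [heq] at this
    norm_num at this
    exact this
  have hb : IntervalIntegrable
      (fun s : ℝ => (1 + (2:ℝ) ^ μ) * ((1 - s) ^ μ + (1 + s) ^ μ)) volume (-1) 1 :=
    (h1.add h2).const_mul _
  refine hb.mono_fun ((by fun_prop : Measurable fun s : ℝ =>
    (1 - s ^ 2) ^ μ).aestronglyMeasurable) ?_
  have hC0 : (0:ℝ) ≤ 1 + (2:ℝ) ^ μ := by positivity
  have hne : ∀ᵐ s ∂(volume.restrict (Set.uIoc (-1:ℝ) 1)), s ≠ 1 := by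
    refine ae_restrict_of_ae ?_
    have : volume ({(1:ℝ)} : Set ℝ) = 0 := measure_singleton 1
    rw [ae_iff]
    simpa using this
  filter_upwards [self_mem_ae_restrict measurableSet_uIoc, hne] with s hs hs1'
  rw [uIoc_of_le (by norm_num : (-1:ℝ) ≤ 1)] at hs
  have hs1 : 0 < 1 - s := lt_of_le_of_ne (by linarith [hs.2]) (by intro h; exact hs1' (by linarith))
  have hs2 : 0 < 1 + s := by linarith [hs.1]
  have hfac : (1 - s^2) ^ μ = (1 - s) ^ μ * (1 + s) ^ μ := by
    rw [← Real.mul_rpow hs1.le hs2.le]; ring_nf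
  have hp : 0 ≤ (1 + s) ^ μ := Real.rpow_nonneg hs2.le μ
  have hq : 0 ≤ (1 - s) ^ μ := Real.rpow_nonneg hs1.le μ
  have h2pos : (0:ℝ) ≤ (2:ℝ) ^ μ := Real.rpow_nonneg (by norm_num) μ
  have key : (1 - s ^ 2) ^ μ ≤ (1 + (2:ℝ) ^ μ) * ((1 - s) ^ μ + (1 + s) ^ μ) := by
    rcases le_or_gt 0 μ with hμ0 | hμ0
    · have hb1 : (1 - s) ^ μ ≤ (2:ℝ) ^ μ :=
        Real.rpow_le_rpow hs1.le (by linarith) hμ0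
      calc (1 - s^2) ^ μ = (1 - s) ^ μ * (1 + s) ^ μ := hfac
        _ ≤ (2:ℝ) ^ μ * (1 + s) ^ μ := by nlinarith
        _ ≤ (1 + (2:ℝ) ^ μ) * ((1 - s) ^ μ + (1 + s) ^ μ) := by nlinarith
    · have hmain : (1 - s) ^ μ * (1 + s) ^ μ ≤ (1 - s) ^ μ + (1 + s) ^ μ := by
        rcases le_or_gt 0 s with hss | hss
        · have : (1 + s) ^ μ ≤ 1 :=
            Real.rpow_le_one_of_one_le_of_nonpos (by linarith) hμ0.le
          nlinarith
        · have : (1 - s) ^ μ ≤ 1 :=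
            Real.rpow_le_one_of_one_le_of_nonpos (by linarith) hμ0.le
          nlinarith
      calc (1 - s^2) ^ μ = (1 - s) ^ μ * (1 + s) ^ μ := hfac
        _ ≤ (1 - s) ^ μ + (1 + s) ^ μ := hmain
        _ ≤ (1 + (2:ℝ) ^ μ) * ((1 - s) ^ μ + (1 + s) ^ μ) := by nlinarith
  have hf0 : 0 ≤ (1 - s^2) ^ μ := Real.rpow_nonneg (by nlinarith) μ
  simp only [Real.norm_eq_abs]
  calc |(1 - s^2) ^ μ| = (1 - s^2) ^ μ := abs_of_nonneg hf0
    _ ≤ (1 + (2:ℝ) ^ μ) * ((1 - s) ^ μ + (1 + s) ^ μ) := key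
    _ ≤ |(1 + (2:ℝ) ^ μ) * ((1 - s) ^ μ + (1 + s) ^ μ)| := le_abs_self _

/-- Complexified integrability. -/
lemma aux_integrableC {μ : ℝ} (hμ : -1 < μ) :
    IntervalIntegrable (fun s : ℝ => (((1 - s ^ 2) ^ μ : ℝ) : ℂ)) volume (-1) 1 := by
  refine (aux_integrable hμ).mono_fun ((Complex.measurable_ofReal.comp
    (by fun_prop : Measurable fun s : ℝ => (1 - s ^ 2) ^ μ)).aestronglyMeasurable) ?_
  exact Eventually.of_forall fun s => by simp [Complex.norm_real]

/-- Integrability of `g·φ` for continuous `g`. -/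
lemma aux_integrableC_mul {μ : ℝ} (hμ : -1 < μ) {g : ℝ → ℂ} (hg : Continuous g) :
    IntervalIntegrable (fun s : ℝ => g s * (((1 - s ^ 2) ^ μ : ℝ) : ℂ)) volume (-1) 1 :=
  (aux_integrableC hμ).continuousOn_mul hg.continuousOn

lemma hasDerivAt_exp_left (t x : ℝ) :
    HasDerivAt (fun s : ℝ => Complex.exp (Complex.I * s * t))
      (Complex.I * t * Complex.exp (Complex.I * x * t)) x := by
  have h : HasDerivAt (fun y : ℂ => Complex.exp (Complex.I * y * t))
      (Complex.I * t * Complex.exp (Complex.I * x * t)) (x : ℂ) := by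
    have h1 : HasDerivAt (fun y : ℂ => Complex.I * y * t) (Complex.I * t) (x : ℂ) := by
      simpa using ((hasDerivAt_id (x:ℂ)).const_mul Complex.I).mul_const (t:ℂ)
    simpa [Function.comp_def, mul_comm] using
      (Complex.hasDerivAt_exp (Complex.I * x * t)).comp (x:ℂ) h1
  exact h.comp_ofReal

lemma hasDerivAt_exp_right (s x : ℝ) :
    HasDerivAt (fun r : ℝ => Complex.exp (Complex.I * s * r))
      (Complex.I * s * Complex.exp (Complex.I * s * x)) x := by
  have h : HasDerivAt (fun y : ℂ => Complex.exp (Complex.I * s * y))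
      (Complex.I * s * Complex.exp (Complex.I * s * x)) (x : ℂ) := by
    have h1 : HasDerivAt (fun y : ℂ => Complex.I * s * y) (Complex.I * s) (x : ℂ) := by
      simpa using (hasDerivAt_id (x:ℂ)).const_mul (Complex.I * s)
    simpa [Function.comp_def, mul_comm] using
      (Complex.hasDerivAt_exp (Complex.I * s * x)).comp (x:ℂ) h1
  exact h.comp_ofReal

/-- Continuity of `(1-s²)^p` for `0 ≤ p`. -/
lemma continuous_pow_aux {p : ℝ} (hp : 0 ≤ p) :
    Continuous fun s : ℝ => (1 - s ^ 2) ^ p := by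
  rw [continuous_iff_continuousAt]
  intro x
  exact (Real.continuousAt_rpow_const _ _ (Or.inr hp)).comp (by fun_prop)

/-- Differentiation under the integral sign. -/
lemma hasDerivAt_integral {ν : ℝ} (hν : ν > -1/2) (t : ℝ) :
    HasDerivAt (fun r : ℝ => ∫ s in (-1:ℝ)..1,
        Complex.exp (Complex.I * s * r) * (((1 - s ^ 2) ^ (ν - 1/2) : ℝ) : ℂ))
      (∫ s in (-1:ℝ)..1, (Complex.I * s) *
        (Complex.exp (Complex.I * s * t) * (((1 - s ^ 2) ^ (ν - 1/2) : ℝ) : ℂ))) t := by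
  have hintm : -1 < ν - 1/2 := by linarith
  have hmeas : ∀ x : ℝ, AEStronglyMeasurable
      (fun s : ℝ => Complex.exp (Complex.I * s * x) * (((1 - s ^ 2) ^ (ν - 1/2) : ℝ) : ℂ))
      (volume.restrict (Set.uIoc (-1:ℝ) 1)) := by
    intro x
    exact (((Complex.continuous_exp.comp (by fun_prop)).measurable).mul
      (Complex.measurable_ofReal.comp (by fun_prop))).aestronglyMeasurable
  have hmeas' : AEStronglyMeasurable
      (fun s : ℝ => (Complex.I * s) *
        (Complex.exp (Complex.I * s * t) * (((1 - s ^ 2) ^ (ν - 1/2) : ℝ) : ℂ)))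
      (volume.restrict (Set.uIoc (-1:ℝ) 1)) := by
    exact ((by fun_prop : Measurable fun s : ℝ => Complex.I * (s:ℂ)).mul
      (((Complex.continuous_exp.comp (by fun_prop)).measurable).mul
      (Complex.measurable_ofReal.comp (by fun_prop)))).aestronglyMeasurable
  have key := intervalIntegral.hasDerivAt_integral_of_dominated_loc_of_deriv_le
    (F := fun (x : ℝ) s => Complex.exp (Complex.I * s * x) * (((1 - s ^ 2) ^ (ν - 1/2) : ℝ) : ℂ))
    (F' := fun (x : ℝ) s => (Complex.I * s) *
      (Complex.exp (Complex.I * s * x) * (((1 - s ^ 2) ^ (ν - 1/2) : ℝ) : ℂ)))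
    (x₀ := t) (a := -1) (b := 1) (μ := volume)
    (bound := fun s => (1 - s ^ 2) ^ (ν - 1/2))
    (Filter.univ_mem)
    (Eventually.of_forall hmeas)
    (aux_integrableC_mul hintm (Complex.continuous_exp.comp (by fun_prop)))
    hmeas'
    ?_ (aux_integrable hintm) ?_
  · exact key.2
  · refine Eventually.of_forall fun s hs x _ => ?_
    rw [uIoc_of_le (by norm_num : (-1:ℝ) ≤ 1)] at hs
    have h1 : (0:ℝ) ≤ 1 - s ^ 2 := by nlinarith [hs.1, hs.2]
    have h2 : |s| ≤ 1 := abs_le.mpr ⟨hs.1.le, hs.2⟩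
    have hφ : (0:ℝ) ≤ (1 - s ^ 2) ^ (ν - 1/2) := Real.rpow_nonneg h1 _
    have : ‖(Complex.I * s) * (Complex.exp (Complex.I * s * x) *
        (((1 - s ^ 2) ^ (ν - 1/2) : ℝ) : ℂ))‖
        = |s| * (1 - s ^ 2) ^ (ν - 1/2) := by
      simp [Complex.norm_real, abs_of_nonneg hφ, Complex.norm_exp]
      left
      rw [show ν - 2⁻¹ = ν - 1/2 by norm_num]
      exact hφ
    rw [this]
    nlinarith
  · refine Eventually.of_forall fun s _ x _ => ?_
    have := (hasDerivAt_exp_right s x).mul_const (((1 - s ^ 2) ^ (ν - 1/2) : ℝ) : ℂ)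
    exact this.congr_deriv (by ring)

/-- Integration by parts identity. -/
lemma ibp {ν : ℝ} (hν : ν > -1/2) (t : ℝ) :
    (∫ s in (-1:ℝ)..1, (Complex.I * s) *
        (Complex.exp (Complex.I * s * t) * (((1 - s ^ 2) ^ (ν - 1/2) : ℝ) : ℂ)))
      = -(t / (2 * ν + 1) : ℝ) *
        ∫ s in (-1:ℝ)..1,
          Complex.exp (Complex.I * s * t) * (((1 - s ^ 2) ^ (ν + 1/2) : ℝ) : ℂ) := by
  have hp : (0:ℝ) < ν + 1/2 := by linarith
  have hintm : -1 < ν - 1/2 := by linarith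
  have hintp : -1 < ν + 1/2 := by linarith
  set G : ℝ → ℂ := fun s => Complex.exp (Complex.I * s * t) * (((1 - s ^ 2) ^ (ν + 1/2) : ℝ) : ℂ)
    with hG
  set G' : ℝ → ℂ := fun s =>
    (Complex.I * t) * (Complex.exp (Complex.I * s * t) * (((1 - s ^ 2) ^ (ν + 1/2) : ℝ) : ℂ))
    + Complex.exp (Complex.I * s * t) *
        ((((ν + 1/2) * (1 - s ^ 2) ^ (ν - 1/2) * (-2 * s) : ℝ)) : ℂ) with hG'
  have hderiv : ∀ x ∈ Ioo (-1:ℝ) 1, HasDerivAt G (G' x) x := by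
    intro x hx
    have hne : 1 - x ^ 2 ≠ 0 := by nlinarith [hx.1, hx.2]
    have hv : HasDerivAt (fun u : ℝ => (1 - u ^ 2) ^ (ν + 1/2))
        ((ν + 1/2) * (1 - x ^ 2) ^ (ν - 1/2) * (-2 * x)) x := by
      have hinner : HasDerivAt (fun u : ℝ => 1 - u ^ 2) (-2 * x) x := by
        simpa using (hasDerivAt_pow 2 x).const_sub 1
      have houter := Real.hasDerivAt_rpow_const (x := 1 - x ^ 2) (p := ν + 1/2) (Or.inl hne)
      have := houter.comp x hinner
      rw [show ν - 1/2 = ν + 1/2 - 1 by ring]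
      exact this
    have hvC := hv.ofReal_comp
    have h := (hasDerivAt_exp_left t x).mul hvC
    exact h.congr_deriv (by simp only [hG']; ring)
  have hcont : ContinuousOn G (Icc (-1:ℝ) 1) := by
    exact ((Complex.continuous_exp.comp (by fun_prop)).mul
      (Complex.continuous_ofReal.comp (continuous_pow_aux hp.le))).continuousOn
  have hint1 : IntervalIntegrable (fun s : ℝ => (Complex.I * t) *
      (Complex.exp (Complex.I * s * t) * (((1 - s ^ 2) ^ (ν + 1/2) : ℝ) : ℂ))) volume (-1) 1 := by
    exact ((continuous_const.mul ((Complex.continuous_exp.comp (by fun_prop)).mul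
      (Complex.continuous_ofReal.comp (continuous_pow_aux hp.le))))).intervalIntegrable _ _
  have hint2 : IntervalIntegrable (fun s : ℝ => Complex.exp (Complex.I * s * t) *
      ((((ν + 1/2) * (1 - s ^ 2) ^ (ν - 1/2) * (-2 * s) : ℝ)) : ℂ)) volume (-1) 1 := by
    have := aux_integrableC_mul hintm
      (g := fun s : ℝ => Complex.exp (Complex.I * s * t) * (((ν + 1/2) * (-2 * s) : ℝ) : ℂ))
      ((Complex.continuous_exp.comp (by fun_prop)).mul
        (Complex.continuous_ofReal.comp (by fun_prop)))
    have heq : (fun s : ℝ => (fun s : ℝ => Complex.exp (Complex.I * s * t) *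
        (((ν + 1/2) * (-2 * s) : ℝ) : ℂ)) s * (((1 - s ^ 2) ^ (ν - 1/2) : ℝ) : ℂ))
        = fun s : ℝ => Complex.exp (Complex.I * s * t) *
          ((((ν + 1/2) * (1 - s ^ 2) ^ (ν - 1/2) * (-2 * s) : ℝ)) : ℂ) := by
      funext s
      push_cast
      ring
    rwa [heq] at this
  have hGint : IntervalIntegrable G' volume (-1) 1 := hint1.add hint2
  have hftc := intervalIntegral.integral_eq_sub_of_hasDerivAt_of_le
    (by norm_num : (-1:ℝ) ≤ 1) hcont hderiv hGint
  have hG1 : G 1 = 0 := by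
    norm_num [hG, Real.zero_rpow hp.ne']
  have hGm1 : G (-1) = 0 := by
    norm_num [hG, Real.zero_rpow hp.ne']
  rw [hG1, hGm1, sub_zero] at hftc
  -- split the integral
  have hsplit : (∫ s in (-1:ℝ)..1, G' s)
      = (Complex.I * t) * (∫ s in (-1:ℝ)..1,
          Complex.exp (Complex.I * s * t) * (((1 - s ^ 2) ^ (ν + 1/2) : ℝ) : ℂ))
        + ∫ s in (-1:ℝ)..1, Complex.exp (Complex.I * s * t) *
            ((((ν + 1/2) * (1 - s ^ 2) ^ (ν - 1/2) * (-2 * s) : ℝ)) : ℂ) := by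
    rw [hG']
    rw [intervalIntegral.integral_add hint1 hint2, intervalIntegral.integral_const_mul]
  rw [hsplit] at hftc
  -- relate second integral to the goal's LHS
  have hrel : (∫ s in (-1:ℝ)..1, Complex.exp (Complex.I * s * t) *
      ((((ν + 1/2) * (1 - s ^ 2) ^ (ν - 1/2) * (-2 * s) : ℝ)) : ℂ))
      = (Complex.I * (2 * ν + 1)) * (∫ s in (-1:ℝ)..1, (Complex.I * s) *
        (Complex.exp (Complex.I * s * t) * (((1 - s ^ 2) ^ (ν - 1/2) : ℝ) : ℂ))) := by
    rw [← intervalIntegral.integral_const_mul]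
    refine intervalIntegral.integral_congr fun s _ => ?_
    push_cast
    have hI : Complex.I * Complex.I = -1 := Complex.I_mul_I
    ring_nf
    rw [Complex.I_sq]
    ring
  rw [hrel] at hftc
  -- solve
  have h2n' : (2 * (ν:ℂ) + 1) ≠ 0 := by
    intro h
    have : (2 * ν + 1 : ℝ) = 0 := by exact_mod_cast h
    linarith
  have hA : (2 * (ν:ℂ) + 1) * (∫ s in (-1:ℝ)..1, (Complex.I * s) *
        (Complex.exp (Complex.I * s * t) * (((1 - s ^ 2) ^ (ν - 1/2) : ℝ) : ℂ)))
      = -(t:ℂ) * (∫ s in (-1:ℝ)..1,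
          Complex.exp (Complex.I * s * t) * (((1 - s ^ 2) ^ (ν + 1/2) : ℝ) : ℂ)) := by
    apply mul_left_cancel₀ Complex.I_ne_zero
    linear_combination hftc
  rw [hG, show (((t / (2 * ν + 1)) : ℝ) : ℂ) = (t:ℂ) / (2 * (ν:ℂ) + 1) by push_cast; ring,
    neg_div', div_mul_eq_mul_div, eq_div_iff h2n']
  linear_combination hA

end BesselAux

/-- For every `ν > -1/2` and `t > 0`, the recursion relation
`d/dt ( t^{-ν} J_ν(t) ) = − t^{-ν} J_{ν+1}(t)` holds. -/
theorem besselJ_recursion (ν : ℝ) (hν : ν > -1/2) (t : ℝ) (ht : t > 0) :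
    deriv (fun s : ℝ => ((s ^ (-ν) : ℝ) : ℂ) * besselJ ν s) t
      = -(((t ^ (-ν) : ℝ) : ℂ) * besselJ (ν + 1) t) := by
  have hG1 : (0:ℝ) < Real.Gamma (ν + 1 / 2) := Real.Gamma_pos_of_pos (by linarith)
  have hG2 : (0:ℝ) < Real.Gamma (1 / 2 : ℝ) := Real.Gamma_pos_of_pos (by norm_num)
  set c : ℝ := (2:ℝ) ^ (-ν) / (Real.Gamma (ν + 1/2) * Real.Gamma (1/2)) with hc
  have hEq : (fun s : ℝ => ((s ^ (-ν) : ℝ) : ℂ) * besselJ ν s) =ᶠ[nhds t]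
      fun r : ℝ => (c : ℂ) * ∫ s in (-1:ℝ)..1,
        Complex.exp (Complex.I * s * r) * (((1 - s ^ 2) ^ (ν - 1/2) : ℝ) : ℂ) := by
    filter_upwards [Ioi_mem_nhds ht] with r hr
    have hr0 : (0:ℝ) < r := hr
    unfold besselJ
    rw [← mul_assoc, ← Complex.ofReal_mul]
    congr 2
    have h1 : r ^ (-ν) * r ^ ν = 1 := by
      rw [← Real.rpow_add hr0]
      norm_num
    have h2 : (0:ℝ) < (2:ℝ) ^ ν := Real.rpow_pos_of_pos two_pos ν
    rw [hc, Real.div_rpow hr0.le (by norm_num : (0:ℝ) ≤ 2),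
      Real.rpow_neg (by norm_num : (0:ℝ) ≤ 2), div_div, ← mul_div_assoc, h1, one_div, mul_inv,
      ← div_eq_mul_inv]
  rw [hEq.deriv_eq]
  have hD := (BesselAux.hasDerivAt_integral hν t).const_mul (c : ℂ)
  rw [hD.deriv, BesselAux.ibp hν t]
  unfold besselJ
  rw [show ν + 1 - 1/2 = ν + 1/2 by ring]
  have hreal : c * (t / (2 * ν + 1))
      = t ^ (-ν) * ((t / 2) ^ (ν + 1) / (Real.Gamma (ν + 1 + 1/2) * Real.Gamma (1/2))) := by
    have hg : Real.Gamma (ν + 1 + 1/2) = (ν + 1/2) * Real.Gamma (ν + 1/2) := by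
      rw [show ν + 1 + 1/2 = (ν + 1/2) + 1 by ring,
        Real.Gamma_add_one (by linarith : (0:ℝ) < ν + 1/2).ne']
    have ht1 : t ^ (-ν) * t ^ (ν + 1) = t := by
      rw [← Real.rpow_add ht]
      norm_num
    have h2p : (0:ℝ) < (2:ℝ) ^ (ν + 1) := Real.rpow_pos_of_pos two_pos _
    have h2e : (2:ℝ) ^ (ν + 1) = 2 ^ ν * 2 := by
      rw [Real.rpow_add two_pos, Real.rpow_one]
    have h2ν : (0:ℝ) < (2:ℝ) ^ ν := Real.rpow_pos_of_pos two_pos ν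
    rw [show (2 * ν + 1 : ℝ) = 2 * (ν + 1/2) by ring]
    set w := ν + 1/2 with hw
    set g1 := Real.Gamma (ν + 1/2) with hg1
    set g2 := Real.Gamma ((1:ℝ)/2) with hg2
    rw [hg, hc, Real.div_rpow ht.le (by norm_num : (0:ℝ) ≤ 2),
      Real.rpow_neg (by norm_num : (0:ℝ) ≤ 2), h2e]
    set x := t ^ (-ν) with hx
    set y := t ^ (ν + 1) with hy
    set z := (2:ℝ) ^ ν with hz
    have hzne : z ≠ 0 := h2ν.ne'
    have hg1ne : g1 ≠ 0 := hG1.ne'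
    have hg2ne : g2 ≠ 0 := hG2.ne'
    have hn2 : w ≠ 0 := by rw [hw]; intro h; linarith [h]
    field_simp
    linear_combination (-1 : ℝ) * ht1
  have hcast := congrArg (fun x : ℝ => (x : ℂ)) hreal
  simp only [Complex.ofReal_mul] at hcast
  linear_combination (-(∫ s in (-1:ℝ)..1,
    Complex.exp (Complex.I * s * t) * (((1 - s ^ 2) ^ (ν + 1/2) : ℝ) : ℂ))) * hcast
end

section
/- There exist constants C > 0, c > 0 and ν₀ ≥ 1 such that for every ν ≥ ν₀ and every r with 0 < r ≤ ν/2, the Bessel function satisfies the exponential decay estimate |J_ν(r)| ≤ C · e^{−c(ν + r)}. -/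
set_option maxHeartbeats 1000000
open MeasureTheory Set

lemma gamma_lb {x : ℝ} (hx : 1 ≤ x) :
    Real.exp (-(x+1)) * x ^ (x - 1) ≤ Real.Gamma x := by
  have hx0 : (0:ℝ) < x := by linarith
  rw [Real.Gamma_eq_integral hx0]
  have hint : IntegrableOn (fun t => Real.exp (-t) * t ^ (x - 1)) (Ioi 0) :=
    Real.GammaIntegral_convergent hx0
  have h1 : ∫ t in Ioc x (x+1), Real.exp (-t) * t ^ (x - 1) ≤
      ∫ t in Ioi 0, Real.exp (-t) * t ^ (x - 1) := by
    apply setIntegral_mono_set hint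
    · filter_upwards [ae_restrict_mem measurableSet_Ioi] with t ht
      have : 0 < t := ht
      positivity
    · exact Filter.Eventually.of_forall fun t ht => mem_Ioi.mpr (lt_of_lt_of_le hx0 ht.1.le)
  have h2 : Real.exp (-(x+1)) * x ^ (x - 1) ≤
      ∫ t in Ioc x (x+1), Real.exp (-t) * t ^ (x - 1) := by
    have hconst : ∫ t in Ioc x (x+1), Real.exp (-(x+1)) * x ^ (x - 1) =
        Real.exp (-(x+1)) * x ^ (x - 1) := by
      rw [setIntegral_const]
      simp [Real.volume_Ioc]
    rw [← hconst]
    apply setIntegral_mono_on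
    · exact ((integrableOn_const_iff).mpr (Or.inr (by simp [Real.volume_Ioc])))
    · exact hint.mono_set (fun t ht => mem_Ioi.mpr (lt_of_lt_of_le hx0 ht.1.le))
    · exact measurableSet_Ioc
    · intro t ht
      have h1 : Real.exp (-(x+1)) ≤ Real.exp (-t) := Real.exp_le_exp.mpr (by linarith [ht.2])
      have h2 : x ^ (x-1) ≤ t ^ (x-1) := Real.rpow_le_rpow hx0.le ht.1.le (by linarith)
      exact mul_le_mul h1 h2 (by positivity) (Real.exp_pos _).le
  linarith



/-- There exist constants `C > 0`, `c > 0` and `ν₀ ≥ 1` such that for every `ν ≥ ν₀`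
and every `r` with `0 < r ≤ ν/2`, one has `|J_ν(r)| ≤ C · e^{−c(ν + r)}`. -/
theorem besselJ_small_argument_decay :
    ∃ C : ℝ, 0 < C ∧ ∃ c : ℝ, 0 < c ∧ ∃ ν₀ : ℝ, 1 ≤ ν₀ ∧
      ∀ ν : ℝ, ν₀ ≤ ν → ∀ r : ℝ, 0 < r → r ≤ ν / 2 →
        ‖besselJ ν r‖ ≤ C * Real.exp (-(c * (ν + r))) := by
  refine ⟨6000, by norm_num, 9/50, by norm_num, 1, le_rfl, fun ν hν r hr hrν => ?_⟩
  have hν0 : (0:ℝ) < ν := by linarith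
  have hG : 0 < Real.Gamma (ν + 1/2) := Real.Gamma_pos_of_pos (by linarith)
  have hG2 : 0 < Real.Gamma (1/2 : ℝ) := Real.Gamma_pos_of_pos (by norm_num)
  set A : ℝ := (r / 2) ^ ν / (Real.Gamma (ν + 1 / 2) * Real.Gamma (1 / 2)) with hA
  have hA0 : 0 ≤ A := by positivity
  -- Step 1: norm bound
  have hI : ‖∫ s in (-1 : ℝ)..(1 : ℝ),
      Complex.exp (Complex.I * (s : ℂ) * (r : ℂ)) * (((1 - s ^ 2) ^ (ν - 1 / 2) : ℝ) : ℂ)‖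
      ≤ 1 * |(1:ℝ) - (-1)| := by
    apply intervalIntegral.norm_integral_le_of_norm_le_const
    intro s hs
    rw [Set.uIoc_of_le (by norm_num : (-1:ℝ) ≤ 1)] at hs
    have hs2 : s^2 ≤ 1 := by nlinarith [hs.1, hs.2]
    have h1s : (0:ℝ) ≤ 1 - s^2 := by linarith
    rw [norm_mul]
    have he : ‖Complex.exp (Complex.I * (s : ℂ) * (r : ℂ))‖ = 1 := by
      rw [Complex.norm_exp]
      simp [Complex.mul_re]
    rw [he, one_mul, Complex.norm_real, Real.norm_eq_abs,
      abs_of_nonneg (Real.rpow_nonneg h1s _)]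
    exact Real.rpow_le_one h1s (by nlinarith) (by linarith)
  have hnorm : ‖besselJ ν r‖ ≤ A * 2 := by
    rw [besselJ, norm_mul, Complex.norm_real, Real.norm_eq_abs, abs_of_nonneg hA0]
    have : |(1:ℝ) - (-1)| = 2 := by norm_num
    rw [this, one_mul] at hI
    exact mul_le_mul_of_nonneg_left hI hA0
  -- Step 2: Gamma lower bound
  have hGlb : Real.exp (-(ν + 3/2)) * ν ^ (ν - 1/2) ≤
      Real.Gamma (ν + 1/2) * Real.Gamma (1/2) := by
    have h1 : Real.exp (-(ν + 1/2 + 1)) * (ν + 1/2) ^ (ν + 1/2 - 1) ≤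
        Real.Gamma (ν + 1/2) := gamma_lb (by linarith)
    have h2 : ν ^ (ν - 1/2) ≤ (ν + 1/2) ^ (ν + 1/2 - 1) := by
      have := Real.rpow_le_rpow hν0.le (by linarith : ν ≤ ν + 1/2) (by linarith : (0:ℝ) ≤ ν - 1/2)
      calc ν ^ (ν - 1/2) ≤ (ν + 1/2) ^ (ν - 1/2) := this
        _ = (ν + 1/2) ^ (ν + 1/2 - 1) := by congr 1; ring
    have h3 : (1:ℝ) ≤ Real.Gamma (1/2) := by
      rw [Real.Gamma_one_half_eq]
      rw [show (1:ℝ) = Real.sqrt 1 by simp]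
      exact Real.sqrt_le_sqrt (by linarith [Real.pi_gt_three])
    calc Real.exp (-(ν + 3/2)) * ν ^ (ν - 1/2)
        ≤ Real.exp (-(ν + 1/2 + 1)) * (ν + 1/2) ^ (ν + 1/2 - 1) := by
          apply mul_le_mul (le_of_eq (by ring_nf)) h2 (Real.rpow_nonneg hν0.le _) (Real.exp_pos _).le
      _ ≤ Real.Gamma (ν + 1/2) := h1
      _ ≤ Real.Gamma (ν + 1/2) * Real.Gamma (1/2) := le_mul_of_one_le_right hG.le h3
  -- Step 3: numerator bound
  have hnum : (r/2) ^ ν ≤ (ν/4) ^ ν :=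
    Real.rpow_le_rpow (by linarith) (by linarith) hν0.le
  have hden0 : 0 < Real.exp (-(ν + 3/2)) * ν ^ (ν - 1/2) := by positivity
  have hA2 : A ≤ (ν/4) ^ ν / (Real.exp (-(ν + 3/2)) * ν ^ (ν - 1/2)) :=
    div_le_div₀ (Real.rpow_nonneg (by linarith) _) hnum hden0 hGlb
  -- Step 4: rewrite the middle quantity
  have hmid : (ν/4) ^ ν / (Real.exp (-(ν + 3/2)) * ν ^ (ν - 1/2))
      = ν ^ ((1:ℝ)/2) * Real.exp (ν + 3/2) / (4:ℝ) ^ ν := by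
    have hsplit : (ν:ℝ) ^ ν = ν ^ (ν - 1/2) * ν ^ ((1:ℝ)/2) := by
      rw [← Real.rpow_add hν0]; norm_num
    rw [Real.div_rpow hν0.le (by norm_num : (0:ℝ) ≤ 4), hsplit, Real.exp_neg]
    have h1 : (0:ℝ) < ν ^ (ν - 1/2) := Real.rpow_pos_of_pos hν0 _
    have h2 : (0:ℝ) < (4:ℝ) ^ ν := Real.rpow_pos_of_pos (by norm_num) _
    field_simp
  -- Step 5: final exponential estimate
  have hsqrt : ν ^ ((1:ℝ)/2) ≤ 400 * Real.exp (ν/10) := by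
    have h1 : ν ^ ((1:ℝ)/2) ≤ ν := by
      calc ν ^ ((1:ℝ)/2) ≤ ν ^ (1:ℝ) := Real.rpow_le_rpow_of_exponent_le hν (by norm_num)
        _ = ν := Real.rpow_one ν
    have h2 : ν ≤ ν^2 := by nlinarith
    have h3 : (ν/20)^2 ≤ Real.exp (ν/10) := by
      have := Real.add_one_le_exp (ν/20)
      have h4 : Real.exp (ν/10) = Real.exp (ν/20) * Real.exp (ν/20) := by
        rw [← Real.exp_add]; ring_nf
      nlinarith [Real.exp_pos (ν/20)]
    nlinarith
  have h4ν : (4:ℝ) ^ ν = Real.exp (Real.log 4 * ν) := Real.rpow_def_of_pos (by norm_num) ν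
  have hlog4 : (1.38:ℝ) ≤ Real.log 4 := by
    have h : Real.log 4 = 2 * Real.log 2 := by
      rw [show (4:ℝ) = 2^2 by norm_num, Real.log_pow]; push_cast; ring
    have := Real.log_two_gt_d9
    linarith
  have hfin : ν ^ ((1:ℝ)/2) * Real.exp (ν + 3/2) / (4:ℝ) ^ ν
      ≤ 6000 / 2 * Real.exp (-(9/50 * (ν + r))) := by
    have hbound : ν ^ ((1:ℝ)/2) * Real.exp (ν + 3/2) / (4:ℝ) ^ ν
        ≤ 400 * Real.exp (ν/10 + (ν + 3/2) - Real.log 4 * ν) := by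
      have e1 : Real.exp (ν/10 + (ν + 3/2) - Real.log 4 * ν)
          = Real.exp (ν/10) * Real.exp (ν + 3/2) * (Real.exp (Real.log 4 * ν))⁻¹ := by
        rw [← Real.exp_neg, ← Real.exp_add, ← Real.exp_add, sub_eq_add_neg]
      rw [e1, h4ν, div_eq_mul_inv]
      calc ν ^ ((1:ℝ)/2) * Real.exp (ν + 3/2) * (Real.exp (Real.log 4 * ν))⁻¹
          ≤ (400 * Real.exp (ν/10)) * Real.exp (ν + 3/2) * (Real.exp (Real.log 4 * ν))⁻¹ := by
            apply mul_le_mul_of_nonneg_right (mul_le_mul_of_nonneg_right hsqrt (Real.exp_pos _).le)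
            positivity
        _ = 400 * (Real.exp (ν/10) * Real.exp (ν + 3/2) * (Real.exp (Real.log 4 * ν))⁻¹) := by
            ring
    have hexp : Real.exp (ν/10 + (ν + 3/2) - Real.log 4 * ν)
        ≤ Real.exp (2 + -(9/50 * (ν + r))) := by
      apply Real.exp_le_exp.mpr
      nlinarith
    calc ν ^ ((1:ℝ)/2) * Real.exp (ν + 3/2) / (4:ℝ) ^ ν
        ≤ 400 * Real.exp (ν/10 + (ν + 3/2) - Real.log 4 * ν) := hbound
      _ ≤ 400 * Real.exp (2 + -(9/50 * (ν + r))) := by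
          exact mul_le_mul_of_nonneg_left hexp (by norm_num)
      _ = 400 * Real.exp 2 * Real.exp (-(9/50 * (ν + r))) := by
          rw [Real.exp_add]; ring
      _ ≤ 6000 / 2 * Real.exp (-(9/50 * (ν + r))) := by
          apply mul_le_mul_of_nonneg_right _ (Real.exp_pos _).le
          have h := Real.exp_one_lt_d9
          have : Real.exp 2 = Real.exp 1 * Real.exp 1 := by rw [← Real.exp_add]; norm_num
          nlinarith [Real.exp_pos 1]
  calc ‖besselJ ν r‖ ≤ A * 2 := hnorm
    _ ≤ ((ν/4) ^ ν / (Real.exp (-(ν + 3/2)) * ν ^ (ν - 1/2))) * 2 := by linarith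
    _ = (ν ^ ((1:ℝ)/2) * Real.exp (ν + 3/2) / (4:ℝ) ^ ν) * 2 := by rw [hmid]
    _ ≤ (6000 / 2 * Real.exp (-(9/50 * (ν + r)))) * 2 := by linarith
    _ = 6000 * Real.exp (-(9/50 * (ν + r))) := by ring
end

section
/- Weighted Hardy inequality: let w : (0,∞) → ℝ be twice continuously differentiable with w(r) ≥ 0, w'(r) ≤ 0, and r·( w'(r)² + 2·w(r)·w''(r) ) ≥ 2·w(r)·w'(r) for all r > 0. Let g : (0,∞) → ℂ be continuously differentiable with lim_{r→0⁺} g(r) = 0. Then ∫_{0}^{∞} w(r)² · |g(r)|² / r² dr ≤ 4 · ∫_{0}^{∞} w(r)² · |g'(r)|² dr. -/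
open MeasureTheory

lemma aux_norm_sq (z : ℂ) : ‖z‖^2 = z.re^2 + z.im^2 := by
  rw [Complex.sq_norm, Complex.normSq_apply]; ring

lemma aux_abs_sq (z : ℂ) : ‖z‖ ^ 2 = z.re^2 + z.im^2 := by
  rw [Complex.sq_norm, Complex.normSq_apply]; ring

lemma aux_ptwise (r W W' A B A' B' : ℝ) (hr : 0 < r) (hW : 0 ≤ W) (hW' : W' ≤ 0) :
    0 ≤ -2 * (((2 * W * W' * (A^2 + B^2) + W^2 * (2*(A*A'+B*B'))) * r - W^2 * (A^2+B^2)) / r^2)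
      + 4 * (W^2 * (A'^2 + B'^2)) - W^2 * (A^2+B^2) / r^2 := by
  have hr2 : (0:ℝ) < r^2 := by positivity
  have hP : 0 ≤ -2*((2*W*W'*(A^2+B^2) + W^2*(2*(A*A'+B*B'))) * r - W^2*(A^2+B^2))
      + 4*(W^2*(A'^2+B'^2))*r^2 - W^2*(A^2+B^2) := by
    nlinarith [mul_nonneg (sq_nonneg W) (sq_nonneg (A - 2*r*A')),
      mul_nonneg (sq_nonneg W) (sq_nonneg (B - 2*r*B')),
      mul_nonneg (mul_nonneg hr.le hW) (mul_nonneg (neg_nonneg.2 hW')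
        (add_nonneg (sq_nonneg A) (sq_nonneg B)))]
  have heq : -2 * (((2 * W * W' * (A^2 + B^2) + W^2 * (2*(A*A'+B*B'))) * r - W^2 * (A^2+B^2)) / r^2)
      + 4 * (W^2 * (A'^2 + B'^2)) - W^2 * (A^2+B^2) / r^2
      = (-2*((2*W*W'*(A^2+B^2) + W^2*(2*(A*A'+B*B'))) * r - W^2*(A^2+B^2))
      + 4*(W^2*(A'^2+B'^2))*r^2 - W^2*(A^2+B^2)) / r^2 := by
    field_simp
  rw [heq]; positivity

lemma aux_sq_int {u : ℝ → ℝ} {e a : ℝ} (hea : e < a)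
    (hc : ContinuousOn u (Set.Icc e a)) (hnn : ∀ t ∈ Set.Icc e a, 0 ≤ u t) :
    (∫ t in e..a, u t)^2 ≤ (a - e) * ∫ t in e..a, (u t)^2 := by
  have hle := hea.le
  have hiu : IntervalIntegrable u volume e a := by
    apply ContinuousOn.intervalIntegrable; rwa [Set.uIcc_of_le hle]
  have hiu2 : IntervalIntegrable (fun t => (u t)^2) volume e a := by
    apply ContinuousOn.intervalIntegrable
    rw [Set.uIcc_of_le hle]; exact (hc.pow 2)
  set G := ∫ t in e..a, u t with hG
  set Q := ∫ t in e..a, (u t)^2 with hQ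
  have hGnn : 0 ≤ G := intervalIntegral.integral_nonneg hle hnn
  have hQnn : 0 ≤ Q := intervalIntegral.integral_nonneg hle (fun t ht => sq_nonneg _)
  rcases eq_or_lt_of_le hGnn with h0 | hGpos
  · nlinarith
  · set lam := G / (a - e) with hlam
    have hae : (0:ℝ) < a - e := by linarith
    have hlampos : 0 < lam := div_pos hGpos hae
    have hpt : ∀ t ∈ Set.Icc e a, u t ≤ lam/2 + (u t)^2/(2*lam) := by
      intro t ht
      rw [div_add_div _ _ (two_ne_zero) (by positivity), le_div_iff₀ (by positivity)]
      nlinarith [sq_nonneg (u t - lam)]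
    have hmono : G ≤ ∫ t in e..a, (lam/2 + (u t)^2/(2*lam)) := by
      apply intervalIntegral.integral_mono_on hle hiu _ hpt
      exact (intervalIntegrable_const).add (hiu2.div_const _)
    rw [intervalIntegral.integral_add (intervalIntegrable_const)
      (hiu2.div_const _), intervalIntegral.integral_const, intervalIntegral.integral_div,
      smul_eq_mul] at hmono
    have h1 : (a - e) * (lam / 2) = G / 2 := by
      rw [hlam]; field_simp
    rw [h1] at hmono
    have h2 : G / 2 ≤ Q / (2 * lam) := by linarith
    rw [div_le_div_iff₀ (by norm_num) (by positivity)] at h2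
    rw [hlam, div_eq_mul_inv] at h2
    have h3 : G * (2 * (G * (a-e)⁻¹)) ≤ Q * 2 := h2
    have h4 : (a - e) * ((a-e)⁻¹) = 1 := mul_inv_cancel₀ (ne_of_gt hae)
    nlinarith [h3, h4]

lemma stepA (w w' : ℝ → ℝ) (g g' : ℝ → ℂ)
    (hw1 : ∀ r ∈ Set.Ioi (0 : ℝ), HasDerivAt w (w' r) r)
    (hw_nonneg : ∀ r ∈ Set.Ioi (0 : ℝ), 0 ≤ w r)
    (hw'_nonpos : ∀ r ∈ Set.Ioi (0 : ℝ), w' r ≤ 0)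
    (hg : ∀ r ∈ Set.Ioi (0 : ℝ), HasDerivAt g (g' r) r)
    (hg'c : ContinuousOn g' (Set.Ioi 0))
    {a b : ℝ} (ha : 0 < a) (hab : a ≤ b) :
    ∫ r in a..b, (w r)^2 * ‖g r‖^2 / r^2
      ≤ 2 * ((w a)^2 * ‖g a‖^2 / a) + 4 * ∫ r in a..b, (w r)^2 * ‖g' r‖^2 := by
  have hwc : ContinuousOn w (Set.Ioi 0) := fun r hr => (hw1 r hr).continuousAt.continuousWithinAt
  have hgc : ContinuousOn g (Set.Ioi 0) := fun r hr => (hg r hr).continuousAt.continuousWithinAt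
  set Fr : ℝ → ℝ := fun r => (w r)^2 * ‖g r‖^2 / r^2 with hFr
  set Hr : ℝ → ℝ := fun r => (w r)^2 * ‖g' r‖^2 with hHr
  set φ : ℝ → ℝ := fun r => (w r)^2 * ((g r).re^2 + (g r).im^2) / r with hφdef
  have hFc : ContinuousOn Fr (Set.Ioi 0) := by
    apply ContinuousOn.div (((hwc.pow 2)).mul ((hgc.norm).pow 2))
      ((continuous_pow 2).continuousOn)
    intro r hr; exact pow_ne_zero 2 (ne_of_gt hr)
  have hHc : ContinuousOn Hr (Set.Ioi 0) := ((hwc.pow 2)).mul ((hg'c.norm).pow 2)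
  set Φ : ℝ → ℝ := fun x => -2 * φ x + (4 * (∫ t in a..x, Hr t) - ∫ t in a..x, Fr t) with hΦdef
  have hsub : Set.Icc a b ⊆ Set.Ioi 0 := fun x hx => lt_of_lt_of_le ha hx.1
  -- derivative of Φ
  have hΦd : ∀ x ∈ Set.Icc a b, HasDerivAt Φ
      (-2 * ((((2*w x*w' x) * ((g x).re^2+(g x).im^2)
        + (w x)^2 * (2*((g x).re*(g' x).re + (g x).im*(g' x).im))) * x
        - (w x)^2*((g x).re^2+(g x).im^2)) / x^2) + (4 * Hr x - Fr x)) x := by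
    intro x hx
    have hx0 : (0:ℝ) < x := hsub hx
    have hre : HasDerivAt (fun r => (g r).re) ((g' x).re) x := by
      exact (Complex.reCLM.hasFDerivAt.comp_hasDerivAt x (hg x hx0))
    have him : HasDerivAt (fun r => (g r).im) ((g' x).im) x := by
      exact (Complex.imCLM.hasFDerivAt.comp_hasDerivAt x (hg x hx0))
    have hφ : HasDerivAt φ
        ((((2*w x*w' x) * ((g x).re^2+(g x).im^2)
        + (w x)^2 * (2*((g x).re*(g' x).re + (g x).im*(g' x).im))) * x
        - (w x)^2*((g x).re^2+(g x).im^2)) / x^2) x := by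
      have h1 := (((hw1 x hx0).pow 2).mul ((hre.pow 2).add (him.pow 2))).div
        (hasDerivAt_id' x) (ne_of_gt hx0)
      refine h1.congr_deriv ?_
      simp
      ring
    have huIcc : Set.uIcc a x ⊆ Set.Ioi 0 := by
      rw [Set.uIcc_of_le hx.1]
      exact fun t ht => lt_of_lt_of_le ha ht.1
    have hIH : IntervalIntegrable Hr volume a x :=
      (hHc.mono huIcc).intervalIntegrable
    have hIF : IntervalIntegrable Fr volume a x :=
      (hFc.mono huIcc).intervalIntegrable
    have hint1 : HasDerivAt (fun y => ∫ t in a..y, Hr t) (Hr x) x :=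
      intervalIntegral.integral_hasDerivAt_right hIH
        (hHc.stronglyMeasurableAtFilter isOpen_Ioi x hx0)
        (hHc.continuousAt (Ioi_mem_nhds hx0))
    have hint2 : HasDerivAt (fun y => ∫ t in a..y, Fr t) (Fr x) x :=
      intervalIntegral.integral_hasDerivAt_right hIF
        (hFc.stronglyMeasurableAtFilter isOpen_Ioi x hx0)
        (hFc.continuousAt (Ioi_mem_nhds hx0))
    exact (hφ.const_mul (-2)).add ((hint1.const_mul 4).sub hint2)
  have hE : ∀ x ∈ Set.Icc a b,
      0 ≤ -2 * ((((2*w x*w' x) * ((g x).re^2+(g x).im^2)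
        + (w x)^2 * (2*((g x).re*(g' x).re + (g x).im*(g' x).im))) * x
        - (w x)^2*((g x).re^2+(g x).im^2)) / x^2) + (4 * Hr x - Fr x) := by
    intro x hx
    have hx0 : (0:ℝ) < x := hsub hx
    have := aux_ptwise x (w x) (w' x) (g x).re (g x).im (g' x).re (g' x).im hx0
      (hw_nonneg x hx0) (hw'_nonpos x hx0)
    have h1 : Hr x = (w x)^2 * ((g' x).re^2 + (g' x).im^2) := by
      simp [hHr, aux_norm_sq, aux_abs_sq]
    have h2 : Fr x = (w x)^2 * ((g x).re^2 + (g x).im^2) / x^2 := by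
      simp [hFr, aux_norm_sq, aux_abs_sq]
    rw [h1, h2]
    linarith [this]
  have hmono : MonotoneOn Φ (Set.Icc a b) := by
    apply monotoneOn_of_deriv_nonneg (convex_Icc a b)
    · exact fun x hx => ((hΦd x hx).continuousAt).continuousWithinAt
    · rw [interior_Icc]
      exact fun x hx => ((hΦd x (Set.Ioo_subset_Icc_self hx)).differentiableAt).differentiableWithinAt
    · rw [interior_Icc]
      intro x hx
      rw [(hΦd x (Set.Ioo_subset_Icc_self hx)).deriv]
      exact hE x (Set.Ioo_subset_Icc_self hx)
  have hΦab : Φ a ≤ Φ b := hmono (Set.left_mem_Icc.2 hab) (Set.right_mem_Icc.2 hab) hab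
  have hΦa : Φ a = -2 * φ a := by
    rw [hΦdef]; simp
  have hφb : 0 ≤ φ b := by
    have hb0 : (0:ℝ) < b := lt_of_lt_of_le ha hab
    rw [hφdef]
    positivity
  have hφa : φ a = (w a)^2 * ‖g a‖^2 / a := by rw [hφdef, aux_norm_sq]
  rw [hΦa, hΦdef] at hΦab
  simp only at hΦab
  rw [← hφa]
  linarith [hΦab, hφb]

/-- Weighted Hardy inequality: if `w : (0,∞) → ℝ` is twice continuously
differentiable with `w ≥ 0`, `w' ≤ 0` and `r(w'² + 2ww'') ≥ 2ww'` on `(0,∞)`, and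
`g : (0,∞) → ℂ` is continuously differentiable with `g(r) → 0` as `r → 0⁺`, then
`∫_0^∞ w² |g|²/r² dr ≤ 4 ∫_0^∞ w² |g'|² dr` (in the extended-real sense). -/
theorem weighted_hardy_inequality
    (w w' w'' : ℝ → ℝ) (g g' : ℝ → ℂ)
    (hw1 : ∀ r ∈ Set.Ioi (0 : ℝ), HasDerivAt w (w' r) r)
    (hw2 : ∀ r ∈ Set.Ioi (0 : ℝ), HasDerivAt w' (w'' r) r)
    (hw2c : ContinuousOn w'' (Set.Ioi 0))
    (hw_nonneg : ∀ r ∈ Set.Ioi (0 : ℝ), 0 ≤ w r)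
    (hw'_nonpos : ∀ r ∈ Set.Ioi (0 : ℝ), w' r ≤ 0)
    (hw_cond : ∀ r ∈ Set.Ioi (0 : ℝ),
      2 * w r * w' r ≤ r * ((w' r) ^ 2 + 2 * w r * w'' r))
    (hg : ∀ r ∈ Set.Ioi (0 : ℝ), HasDerivAt g (g' r) r)
    (hg'c : ContinuousOn g' (Set.Ioi 0))
    (hg0 : Filter.Tendsto g (nhdsWithin 0 (Set.Ioi 0)) (nhds 0)) :
    (∫⁻ r in Set.Ioi (0 : ℝ), ENNReal.ofReal ((w r) ^ 2 * ‖g r‖ ^ 2 / r ^ 2))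
      ≤ 4 * ∫⁻ r in Set.Ioi (0 : ℝ), ENNReal.ofReal ((w r) ^ 2 * ‖g' r‖ ^ 2) := by
  classical
  set Fr : ℝ → ℝ := fun r => (w r)^2 * ‖g r‖^2 / r^2 with hFrdef
  set Hr : ℝ → ℝ := fun r => (w r)^2 * ‖g' r‖^2 with hHrdef
  have hwc : ContinuousOn w (Set.Ioi 0) := fun r hr => (hw1 r hr).continuousAt.continuousWithinAt
  have hgc : ContinuousOn g (Set.Ioi 0) := fun r hr => (hg r hr).continuousAt.continuousWithinAt
  have hFc : ContinuousOn Fr (Set.Ioi 0) := by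
    apply ContinuousOn.div (((hwc.pow 2)).mul ((hgc.norm).pow 2))
      ((continuous_pow 2).continuousOn)
    intro r hr; exact pow_ne_zero 2 (ne_of_gt hr)
  have hHc : ContinuousOn Hr (Set.Ioi 0) := ((hwc.pow 2)).mul ((hg'c.norm).pow 2)
  have hFnn : ∀ r, 0 ≤ Fr r := fun r => by positivity
  have hHnn : ∀ r, 0 ≤ Hr r := fun r => by positivity
  -- antitone w
  have hw_anti : AntitoneOn w (Set.Ioi 0) := by
    apply antitoneOn_of_deriv_nonpos (convex_Ioi 0) hwc
    · rw [interior_Ioi]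
      exact fun x hx => ((hw1 x hx).differentiableAt).differentiableWithinAt
    · rw [interior_Ioi]
      intro x hx
      rw [(hw1 x hx).deriv]
      exact hw'_nonpos x hx
  set J := ∫⁻ r in Set.Ioi (0 : ℝ), ENNReal.ofReal (Hr r) with hJdef
  rcases eq_or_ne J ⊤ with hJ | hJ
  · rw [hJ, ENNReal.mul_top (by norm_num)]
    exact le_top
  -- measures
  set μ := volume.restrict (Set.Ioi (0:ℝ)) with hμdef
  set νH := μ.withDensity (fun r => ENNReal.ofReal (Hr r)) with hνHdef
  set νF := μ.withDensity (fun r => ENNReal.ofReal (Fr r)) with hνFdef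
  have hrestr : ∀ s : Set ℝ, MeasurableSet s → s ⊆ Set.Ioi 0 →
      (∀ f : ℝ → ENNReal, ∫⁻ r in s, f r ∂μ = ∫⁻ r in s, f r ∂volume) := by
    intro s hs hsub f
    rw [hμdef, Measure.restrict_restrict hs, Set.inter_eq_self_of_subset_left hsub]
  have hνH_apply : ∀ s : Set ℝ, MeasurableSet s → s ⊆ Set.Ioi 0 →
      νH s = ∫⁻ r in s, ENNReal.ofReal (Hr r) ∂volume := by
    intro s hs hsub
    rw [hνHdef, withDensity_apply _ hs, hrestr s hs hsub]
  have hνH_Ioi : νH (Set.Ioi 0) = J :=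
    hνH_apply _ measurableSet_Ioi subset_rfl
  have hνH_fin : ∀ s : Set ℝ, νH s ≠ ⊤ := by
    intro s
    have h1 : νH s ≤ νH Set.univ := measure_mono (Set.subset_univ s)
    have h2 : νH Set.univ = J := by
      rw [hνHdef, withDensity_apply _ MeasurableSet.univ, Measure.restrict_univ, hμdef, hJdef]
    exact ne_top_of_le_ne_top (h2 ▸ hJ) h1
  -- step B
  have hB : ∀ a : ℝ, 0 < a → (w a)^2 * ‖g a‖^2 ≤ a * (νH (Set.Ioc 0 a)).toReal := by
    intro a ha
    set T := (νH (Set.Ioc 0 a)).toReal with hTdef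
    have hT0 : 0 ≤ T := ENNReal.toReal_nonneg
    have hε : ∀ e ∈ Set.Ioo (0:ℝ) a, w a * ‖g a - g e‖ ≤ Real.sqrt (a * T) := by
      intro e he
      obtain ⟨he0, hea⟩ := he
      have hIccsub : Set.Icc e a ⊆ Set.Ioi 0 := fun t ht => lt_of_lt_of_le he0 ht.1
      have huIcc : Set.uIcc e a ⊆ Set.Ioi 0 := by rw [Set.uIcc_of_le hea.le]; exact hIccsub
      have hg'int : IntervalIntegrable g' volume e a := (hg'c.mono huIcc).intervalIntegrable
      have hftc : ∫ t in e..a, g' t = g a - g e :=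
        intervalIntegral.integral_eq_sub_of_hasDerivAt (fun t ht => hg t (huIcc ht)) hg'int
      have hint1 : IntervalIntegrable (fun t => w a * ‖g' t‖) volume e a :=
        ((hg'c.norm.mono huIcc).const_smul (w a)).intervalIntegrable
      have hint2 : IntervalIntegrable (fun t => w t * ‖g' t‖) volume e a :=
        (((hwc.mono huIcc)).mul (hg'c.norm.mono huIcc)).intervalIntegrable
      have h2 : w a * ‖g a - g e‖ ≤ ∫ t in e..a, w t * ‖g' t‖ := by
        calc w a * ‖g a - g e‖ = w a * ‖∫ t in e..a, g' t‖ := by rw [hftc]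
          _ ≤ w a * ∫ t in e..a, ‖g' t‖ :=
            mul_le_mul_of_nonneg_left
              (intervalIntegral.norm_integral_le_integral_norm hea.le) (hw_nonneg a ha)
          _ = ∫ t in e..a, w a * ‖g' t‖ := by rw [intervalIntegral.integral_const_mul]
          _ ≤ ∫ t in e..a, w t * ‖g' t‖ := by
            apply intervalIntegral.integral_mono_on hea.le hint1 hint2
            intro t ht
            exact mul_le_mul_of_nonneg_right
              (hw_anti (hIccsub ht) ha (ht.2)) (norm_nonneg _)
      have h3 := aux_sq_int hea (u := fun t => w t * ‖g' t‖)
        ((hwc.mono hIccsub).mul ((hg'c.mono hIccsub).norm))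
        (fun t ht => mul_nonneg (hw_nonneg t (hIccsub ht)) (norm_nonneg _))
      have hq_eq : ∀ t : ℝ, (w t * ‖g' t‖)^2 = Hr t := by
        intro t; rw [hHrdef]; simp [mul_pow]
      have hq_int : IntegrableOn Hr (Set.Ioc e a) volume := by
        apply ContinuousOn.integrableOn_compact isCompact_Icc (hHc.mono hIccsub) |>.mono_set
          Set.Ioc_subset_Icc_self
      have h4 : ∫ t in e..a, (w t * ‖g' t‖)^2 ≤ T := by
        simp only [hq_eq]
        have heq1 : ∫ t in e..a, Hr t = ∫ t in Set.Ioc e a, Hr t ∂volume := by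
          rw [intervalIntegral.integral_of_le hea.le]
        have heq2 : ENNReal.ofReal (∫ t in Set.Ioc e a, Hr t ∂volume)
            = ∫⁻ t in Set.Ioc e a, ENNReal.ofReal (Hr t) ∂volume :=
          MeasureTheory.ofReal_integral_eq_lintegral_ofReal hq_int
            (Filter.Eventually.of_forall hHnn)
        have heq3 : ∫⁻ t in Set.Ioc e a, ENNReal.ofReal (Hr t) ∂volume = νH (Set.Ioc e a) :=
          (hνH_apply _ measurableSet_Ioc (fun t ht => lt_of_lt_of_le he0 ht.1.le)).symm
        have hle : νH (Set.Ioc e a) ≤ νH (Set.Ioc 0 a) :=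
          measure_mono (Set.Ioc_subset_Ioc_left he0.le)
        have hnn : 0 ≤ ∫ t in Set.Ioc e a, Hr t ∂volume :=
          MeasureTheory.setIntegral_nonneg measurableSet_Ioc (fun t _ => hHnn t)
        rw [heq1]
        calc ∫ t in Set.Ioc e a, Hr t ∂volume
            = (ENNReal.ofReal (∫ t in Set.Ioc e a, Hr t ∂volume)).toReal := by
              rw [ENNReal.toReal_ofReal hnn]
          _ ≤ T := by
              rw [heq2, heq3, hTdef]
              exact ENNReal.toReal_mono (hνH_fin _) hle
      have hGnn : 0 ≤ ∫ t in e..a, w t * ‖g' t‖ :=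
        intervalIntegral.integral_nonneg hea.le
          (fun t ht => mul_nonneg (hw_nonneg t (hIccsub ht)) (norm_nonneg _))
      have hQnn : 0 ≤ ∫ t in e..a, (w t * ‖g' t‖)^2 :=
        intervalIntegral.integral_nonneg hea.le (fun t ht => sq_nonneg _)
      have h5 : (∫ t in e..a, w t * ‖g' t‖)^2 ≤ a * T := by
        refine le_trans h3 ?_
        have : (a - e) * ∫ t in e..a, (w t * ‖g' t‖)^2 ≤ a * T := by
          apply mul_le_mul (by linarith) h4 hQnn ha.le
        linarith
      have h6 : (∫ t in e..a, w t * ‖g' t‖) ≤ Real.sqrt (a * T) :=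
        (Real.le_sqrt hGnn (by positivity)).2 h5
      linarith
    have hlim : Filter.Tendsto (fun e => w a * ‖g a - g e‖)
        (nhdsWithin 0 (Set.Ioi 0)) (nhds (w a * ‖g a - 0‖)) :=
      ((tendsto_const_nhds.sub hg0).norm).const_mul _
    have hle : w a * ‖g a‖ ≤ Real.sqrt (a * T) := by
      have hmem : Set.Ioo (0:ℝ) a ∈ nhdsWithin (0:ℝ) (Set.Ioi 0) :=
        Ioo_mem_nhdsGT_of_mem ⟨le_refl 0, ha⟩
      have := le_of_tendsto hlim (Filter.eventually_iff_exists_mem.2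
        ⟨Set.Ioo 0 a, hmem, fun e he => hε e he⟩)
      simpa using this
    have hsq : (w a * ‖g a‖)^2 ≤ a * T := by
      have h1 : (w a * ‖g a‖)^2 ≤ (Real.sqrt (a * T))^2 := by
        apply pow_le_pow_left₀ (mul_nonneg (hw_nonneg a ha) (norm_nonneg _)) hle
      rwa [Real.sq_sqrt (by positivity)] at h1
    calc (w a)^2 * ‖g a‖^2 = (w a * ‖g a‖)^2 := by ring
      _ ≤ a * (νH (Set.Ioc 0 a)).toReal := hsq
  -- per-interval bound
  have hIoc : ∀ a b : ℝ, 0 < a → a ≤ b →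
      ∫⁻ r in Set.Ioc a b, ENNReal.ofReal (Fr r) ∂volume
        ≤ 2 * νH (Set.Ioc 0 a) + 4 * νH (Set.Ioi 0) := by
    intro a b ha hab
    have hIccsub : Set.Icc a b ⊆ Set.Ioi 0 := fun t ht => lt_of_lt_of_le ha ht.1
    have hIocsub : Set.Ioc a b ⊆ Set.Ioi 0 := fun t ht => lt_of_lt_of_le ha ht.1.le
    have hF_int : IntegrableOn Fr (Set.Ioc a b) volume :=
      (ContinuousOn.integrableOn_compact isCompact_Icc (hFc.mono hIccsub)).mono_set
        Set.Ioc_subset_Icc_self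
    have hH_int : IntegrableOn Hr (Set.Ioc a b) volume :=
      (ContinuousOn.integrableOn_compact isCompact_Icc (hHc.mono hIccsub)).mono_set
        Set.Ioc_subset_Icc_self
    have heqF : ∫⁻ r in Set.Ioc a b, ENNReal.ofReal (Fr r) ∂volume
        = ENNReal.ofReal (∫ r in a..b, Fr r) := by
      rw [intervalIntegral.integral_of_le hab,
        MeasureTheory.ofReal_integral_eq_lintegral_ofReal hF_int
          (Filter.Eventually.of_forall hFnn)]
    have hstepA := stepA w w' g g' hw1 hw_nonneg hw'_nonpos hg hg'c ha hab
    have hφT : (w a)^2 * ‖g a‖^2 / a ≤ (νH (Set.Ioc 0 a)).toReal := by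
      rw [div_le_iff₀ ha]
      have := hB a ha
      linarith
    have hofφ : ENNReal.ofReal ((w a)^2 * ‖g a‖^2 / a) ≤ νH (Set.Ioc 0 a) := by
      calc ENNReal.ofReal ((w a)^2 * ‖g a‖^2 / a)
          ≤ ENNReal.ofReal ((νH (Set.Ioc 0 a)).toReal) := ENNReal.ofReal_le_ofReal hφT
        _ = νH (Set.Ioc 0 a) := ENNReal.ofReal_toReal (hνH_fin _)
    have hofH : ENNReal.ofReal (∫ r in a..b, Hr r) ≤ νH (Set.Ioi 0) := by
      rw [intervalIntegral.integral_of_le hab,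
        MeasureTheory.ofReal_integral_eq_lintegral_ofReal hH_int
          (Filter.Eventually.of_forall hHnn),
        ← hνH_apply _ measurableSet_Ioc hIocsub]
      exact measure_mono hIocsub
    rw [heqF]
    calc ENNReal.ofReal (∫ r in a..b, Fr r)
        ≤ ENNReal.ofReal (2 * ((w a)^2 * ‖g a‖^2 / a) + 4 * ∫ r in a..b, Hr r) :=
          ENNReal.ofReal_le_ofReal hstepA
      _ ≤ ENNReal.ofReal (2 * ((w a)^2 * ‖g a‖^2 / a))
          + ENNReal.ofReal (4 * ∫ r in a..b, Hr r) := ENNReal.ofReal_add_le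
      _ = 2 * ENNReal.ofReal ((w a)^2 * ‖g a‖^2 / a)
          + 4 * ENNReal.ofReal (∫ r in a..b, Hr r) := by
            rw [ENNReal.ofReal_mul (by norm_num : (0:ℝ) ≤ 2),
              ENNReal.ofReal_mul (by norm_num : (0:ℝ) ≤ 4)]
            norm_num
      _ ≤ 2 * νH (Set.Ioc 0 a) + 4 * νH (Set.Ioi 0) :=
          add_le_add (mul_le_mul_right hofφ 2) (mul_le_mul_right hofH 4)
  -- covering sets
  set A : ℕ → Set ℝ := fun n => Set.Ioc (1/((n:ℝ)+1)) ((n:ℝ)+1) with hAdef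
  have hposn : ∀ n : ℕ, (0:ℝ) < 1/((n:ℝ)+1) := fun n => by positivity
  have hAsub : ∀ n, A n ⊆ Set.Ioi 0 := fun n x hx => lt_trans (hposn n) hx.1
  have hAmono : Monotone A := by
    intro n m hnm
    apply Set.Ioc_subset_Ioc
    · apply one_div_le_one_div_of_le (by positivity)
      have : (n:ℝ) ≤ m := Nat.cast_le.2 hnm
      linarith
    · have : (n:ℝ) ≤ m := Nat.cast_le.2 hnm
      linarith
  have hAunion : ⋃ n, A n = Set.Ioi 0 := by
    ext x
    simp only [Set.mem_iUnion, Set.mem_Ioc, Set.mem_Ioi, hAdef]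
    constructor
    · rintro ⟨n, h1, _⟩; exact lt_trans (hposn n) h1
    · intro hx
      obtain ⟨n1, hn1⟩ := exists_nat_one_div_lt hx
      obtain ⟨n2, hn2⟩ := exists_nat_ge x
      refine ⟨max n1 n2, ?_, ?_⟩
      · refine lt_of_le_of_lt ?_ hn1
        apply one_div_le_one_div_of_le (by positivity)
        have : (n1:ℝ) ≤ (max n1 n2 : ℕ) := Nat.cast_le.2 (le_max_left _ _)
        linarith
      · have : (n2:ℝ) ≤ (max n1 n2 : ℕ) := Nat.cast_le.2 (le_max_right _ _)
        linarith
  have hLHS : (∫⁻ r in Set.Ioi (0:ℝ), ENNReal.ofReal (Fr r)) = νF (Set.Ioi 0) := by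
    rw [hνFdef, withDensity_apply _ measurableSet_Ioi, hrestr _ measurableSet_Ioi subset_rfl]
  have hνF_apply : ∀ n, νF (A n) = ∫⁻ r in A n, ENNReal.ofReal (Fr r) ∂volume := by
    intro n
    rw [hνFdef, withDensity_apply _ measurableSet_Ioc, hrestr _ measurableSet_Ioc (hAsub n)]
  have hsup : νF (Set.Ioi 0) = ⨆ n, νF (A n) := by
    rw [← hAunion]; exact Directed.measure_iUnion (hAmono.directed_le)
  have htail : Filter.Tendsto (fun n : ℕ => νH (Set.Ioc 0 (1/((n:ℝ)+1))))
      Filter.atTop (nhds 0) := by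
    have h0 : ⋂ n : ℕ, Set.Ioc (0:ℝ) (1/((n:ℝ)+1)) = ∅ := by
      ext x
      simp only [Set.mem_iInter, Set.mem_Ioc, Set.mem_empty_iff_false, iff_false]
      intro h
      obtain ⟨hx0, _⟩ := h 0
      obtain ⟨n, hn⟩ := exists_nat_one_div_lt hx0
      exact absurd (h n).2 (not_le.2 hn)
    have hanti : Antitone (fun n : ℕ => Set.Ioc (0:ℝ) (1/((n:ℝ)+1))) := by
      intro n m hnm
      apply Set.Ioc_subset_Ioc_right
      apply one_div_le_one_div_of_le (by positivity)
      have : (n:ℝ) ≤ m := Nat.cast_le.2 hnm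
      linarith
    have := tendsto_measure_iInter_atTop (μ := νH)
      (fun n : ℕ => measurableSet_Ioc.nullMeasurableSet) hanti ⟨0, hνH_fin _⟩
    rw [h0] at this
    simpa [Function.comp_def] using this
  have hgoal : (∫⁻ r in Set.Ioi (0:ℝ), ENNReal.ofReal (Fr r)) ≤ 4 * J := by
    rw [hLHS, hsup]
    apply ENNReal.le_of_forall_pos_le_add
    intro ε hε h4J
    have hhalf : (0:ENNReal) < ε/2 :=
      ENNReal.half_pos (by exact_mod_cast hε.ne')
    obtain ⟨m, hm⟩ := (htail.eventually (gt_mem_nhds hhalf)).exists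
    apply iSup_le
    intro n
    set k := max n m with hkdef
    have hk1 : (0:ℝ) < 1/((k:ℝ)+1) := hposn k
    have hk2 : 1/((k:ℝ)+1) ≤ (k:ℝ)+1 := by
      calc 1/((k:ℝ)+1) ≤ 1 := by
            rw [div_le_one (by positivity)]; simp [Nat.cast_nonneg]
        _ ≤ (k:ℝ)+1 := by simp [Nat.cast_nonneg]
    calc νF (A n) ≤ νF (A k) := measure_mono (hAmono (le_max_left n m))
      _ = ∫⁻ r in A k, ENNReal.ofReal (Fr r) ∂volume := hνF_apply k
      _ ≤ 2 * νH (Set.Ioc 0 (1/((k:ℝ)+1))) + 4 * νH (Set.Ioi 0) := hIoc _ _ hk1 hk2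
      _ ≤ 2 * νH (Set.Ioc 0 (1/((m:ℝ)+1))) + 4 * J := by
          rw [hνH_Ioi]
          apply add_le_add_left
          apply mul_le_mul_right
          apply measure_mono
          apply Set.Ioc_subset_Ioc_right
          apply one_div_le_one_div_of_le (by positivity)
          have : (m:ℝ) ≤ (k:ℕ) := Nat.cast_le.2 (le_max_right n m)
          linarith
      _ ≤ 2 * (ε/2) + 4 * J := by
          apply add_le_add_left
          exact mul_le_mul_right hm.le 2
      _ = 4 * J + ε := by
          rw [ENNReal.mul_div_cancel' (by norm_num) (by norm_num), add_comm]
  exact hgoal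
end

section
/- Let τ > 0 and let g : (0,∞) → ℂ be continuously differentiable with lim_{r→0⁺} g(r) = 0. Then ∫_{0}^{∞} e^{−2rτ} (1 + 2rτ) · |g(r)|² / r² dr ≤ 4 · ∫_{0}^{∞} e^{−2rτ} (1 + 2rτ) · |g'(r)|² dr. -/
open MeasureTheory


lemma whd_u {τ r : ℝ} (hr : 0 < r) :
    HasDerivAt (fun r => Real.exp (-2*r*τ) * (1+2*r*τ) / r)
      (-(4*τ^2*Real.exp (-2*r*τ)) - Real.exp (-2*r*τ)*(1+2*r*τ)/r^2) r := by
  have h1 : HasDerivAt (fun r : ℝ => -2*r*τ) (-2*τ) r := by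
    simpa using ((hasDerivAt_id r).const_mul (-2 : ℝ)).mul_const τ
  have hexp := h1.exp
  have h2 : HasDerivAt (fun r : ℝ => 1+2*r*τ) (2*τ) r := by
    simpa using (((hasDerivAt_id r).const_mul (2:ℝ)).mul_const τ).const_add 1
  have hw := hexp.mul h2
  have hu : HasDerivAt (fun r => Real.exp (-2*r*τ) * (1+2*r*τ) / r) _ r :=
    hw.div (hasDerivAt_id r) (ne_of_gt hr)
  convert hu using 1
  have : Real.exp (-2*r*τ) * (-2*τ) * (1+2*r*τ) + Real.exp (-2*r*τ) * (2*τ)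
      = -(4*τ^2*Real.exp (-2*r*τ)) * r := by ring
  have hr0 : r ≠ 0 := ne_of_gt hr
  simp only [id, Pi.mul_apply]
  field_simp
  ring

lemma whd_n {g g' : ℝ → ℂ} {r : ℝ} (hgr : HasDerivAt g (g' r) r) :
    HasDerivAt (fun r => ‖g r‖^2)
      (2*((g r).re*(g' r).re + (g r).im*(g' r).im)) r := by
  have hre : HasDerivAt (fun r => (g r).re) ((g' r).re) r :=
    (Complex.reCLM.hasFDerivAt.comp_hasDerivAt r hgr)
  have him : HasDerivAt (fun r => (g r).im) ((g' r).im) r :=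
    (Complex.imCLM.hasFDerivAt.comp_hasDerivAt r hgr)
  have h : HasDerivAt (fun r => (g r).re * (g r).re + (g r).im * (g r).im) _ r :=
    (hre.mul hre).add (him.mul him)
  have heq : (fun r => (g r).re * (g r).re + (g r).im * (g r).im)
      = fun r => ‖g r‖^2 := by
    funext x
    rw [Complex.sq_norm, Complex.normSq_apply]
  rw [heq] at h
  convert h using 1
  ring

lemma whd_interval (τ : ℝ) (hτ : 0 < τ) (g g' : ℝ → ℂ)
    (hg : ∀ r ∈ Set.Ioi (0 : ℝ), HasDerivAt g (g' r) r)
    (hg'c : ContinuousOn g' (Set.Ioi 0))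
    {a b : ℝ} (ha : 0 < a) (hab : a ≤ b) :
    ∫ r in a..b, Real.exp (-2*r*τ)*(1+2*r*τ)*‖g r‖^2/r^2
      ≤ 2*(Real.exp (-2*a*τ)*(1+2*a*τ)/a*‖g a‖^2)
        + 4*∫ r in a..b, Real.exp (-2*r*τ)*(1+2*r*τ)*‖g' r‖^2 := by
  have huIcc : Set.uIcc a b = Set.Icc a b := Set.uIcc_of_le hab
  have hsub : Set.uIcc a b ⊆ Set.Ioi 0 := by
    rw [huIcc]; intro x hx; exact lt_of_lt_of_le ha hx.1
  -- continuity facts on uIcc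
  have hgc : ContinuousOn g (Set.uIcc a b) :=
    fun x hx => ((hg x (hsub hx)).continuousAt).continuousWithinAt
  have hg'cI : ContinuousOn g' (Set.uIcc a b) := hg'c.mono hsub
  have hne : ∀ x ∈ Set.uIcc a b, x ≠ 0 := fun x hx => ne_of_gt (hsub hx)
  have hwc : ContinuousOn (fun r => Real.exp (-2*r*τ)*(1+2*r*τ)) (Set.uIcc a b) := by
    fun_prop
  have hnc : ContinuousOn (fun r => ‖g r‖^2) (Set.uIcc a b) := by fun_prop
  have hn'c : ContinuousOn (fun r => 2*((g r).re*(g' r).re + (g r).im*(g' r).im))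
      (Set.uIcc a b) := by fun_prop
  have hfc : ContinuousOn (fun r => Real.exp (-2*r*τ)*(1+2*r*τ)*‖g r‖^2/r^2)
      (Set.uIcc a b) := ((hwc.mul hnc).div (by fun_prop) (fun x hx => pow_ne_zero 2 (hne x hx)))
  have hhc : ContinuousOn (fun r => Real.exp (-2*r*τ)*(1+2*r*τ)*‖g' r‖^2)
      (Set.uIcc a b) := by fun_prop
  have huc : ContinuousOn (fun r => Real.exp (-2*r*τ)*(1+2*r*τ)/r) (Set.uIcc a b) :=
    hwc.div (by fun_prop) hne
  have hu'c : ContinuousOn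
      (fun r => -(4*τ^2*Real.exp (-2*r*τ)) - Real.exp (-2*r*τ)*(1+2*r*τ)/r^2)
      (Set.uIcc a b) := by
    apply ContinuousOn.sub (by fun_prop)
    exact hwc.div (by fun_prop) (fun x hx => pow_ne_zero 2 (hne x hx))
  -- integration by parts
  have hIBP := intervalIntegral.integral_deriv_mul_eq_sub
    (u := fun r => Real.exp (-2*r*τ)*(1+2*r*τ)/r) (v := fun r => ‖g r‖^2)
    (u' := fun r => -(4*τ^2*Real.exp (-2*r*τ)) - Real.exp (-2*r*τ)*(1+2*r*τ)/r^2)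
    (v' := fun r => 2*((g r).re*(g' r).re + (g r).im*(g' r).im))
    (fun x hx => whd_u (hsub hx)) (fun x hx => whd_n (hg x (hsub hx)))
    (hu'c.intervalIntegrable) (hn'c.intervalIntegrable)
  set u : ℝ → ℝ := fun r => Real.exp (-2*r*τ)*(1+2*r*τ)/r with hu_def
  set u' : ℝ → ℝ := fun r => -(4*τ^2*Real.exp (-2*r*τ)) - Real.exp (-2*r*τ)*(1+2*r*τ)/r^2
    with hu'_def
  set n : ℝ → ℝ := fun r => ‖g r‖^2 with hn_def
  set n' : ℝ → ℝ := fun r => 2*((g r).re*(g' r).re + (g r).im*(g' r).im) with hn'_def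
  set f : ℝ → ℝ := fun r => Real.exp (-2*r*τ)*(1+2*r*τ)*‖g r‖^2/r^2 with hf_def
  set h : ℝ → ℝ := fun r => Real.exp (-2*r*τ)*(1+2*r*τ)*‖g' r‖^2 with hh_def
  have hmemx : ∀ x ∈ Set.Icc a b, x ∈ Set.uIcc a b := by rw [huIcc]; exact fun x hx => hx
  -- pointwise bound 1 : f ≤ (-u') * n
  have hpt1 : ∀ x ∈ Set.Icc a b, f x ≤ -(u' x) * n x := by
    intro x hx
    have hx0 : 0 < x := hsub (hmemx x hx)
    have hkey : -(u' x) * n x - f x = 4*τ^2*Real.exp (-2*x*τ)*‖g x‖^2 := by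
      simp only [hu'_def, hn_def, hf_def]; ring
    nlinarith [mul_nonneg (mul_nonneg (by positivity : (0:ℝ) ≤ 4*τ^2)
      (Real.exp_pos (-2*x*τ)).le) (sq_nonneg ‖g x‖)]
  -- pointwise bound 2 : u * n' ≤ (1/2) f + 2 h
  have hpt2 : ∀ x ∈ Set.Icc a b, u x * n' x ≤ (1/2) * f x + 2 * h x := by
    intro x hx
    have hx0 : 0 < x := hsub (hmemx x hx)
    set X := (g x).re; set Y := (g x).im; set X' := (g' x).re; set Y' := (g' x).im
    have hgx : ‖g x‖^2 = X^2 + Y^2 := by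
      rw [Complex.sq_norm, Complex.normSq_apply]; ring
    have hg'x : ‖g' x‖^2 = X'^2 + Y'^2 := by
      rw [Complex.sq_norm, Complex.normSq_apply]; ring
    have hw0 : 0 < Real.exp (-2*x*τ)*(1+2*x*τ) := by positivity
    have h4 : 4*x*(X*X'+Y*Y') ≤ (X^2+Y^2) + 4*x^2*(X'^2+Y'^2) := by
      nlinarith [sq_nonneg (X - 2*x*X'), sq_nonneg (Y - 2*x*Y')]
    have hmul := mul_le_mul_of_nonneg_left h4
      (le_of_lt (div_pos hw0 (by positivity : (0:ℝ) < 2*x^2)))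
    calc u x * n' x = Real.exp (-2*x*τ)*(1+2*x*τ)/(2*x^2) * (4*x*(X*X'+Y*Y')) := by
          simp only [hu_def, hn'_def]; field_simp; ring
      _ ≤ Real.exp (-2*x*τ)*(1+2*x*τ)/(2*x^2) * ((X^2+Y^2) + 4*x^2*(X'^2+Y'^2)) := hmul
      _ = (1/2) * f x + 2 * h x := by
          simp only [hf_def, hh_def, hgx, hg'x]; field_simp; ring
  -- integrabilities
  have hif : IntervalIntegrable f volume a b := hfc.intervalIntegrable
  have hih : IntervalIntegrable h volume a b := hhc.intervalIntegrable
  have hiu'n : IntervalIntegrable (fun x => u' x * n x) volume a b :=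
    (hu'c.mul hnc).intervalIntegrable
  have hiun' : IntervalIntegrable (fun x => u x * n' x) volume a b :=
    (huc.mul hn'c).intervalIntegrable
  -- split IBP
  have hsplit : (∫ x in a..b, (u' x * n x + u x * n' x))
      = (∫ x in a..b, u' x * n x) + (∫ x in a..b, u x * n' x) :=
    intervalIntegral.integral_add hiu'n hiun'
  rw [hsplit] at hIBP
  have h1 : (∫ r in a..b, f r) ≤ ∫ x in a..b, -(u' x) * n x :=
    intervalIntegral.integral_mono_on hab hif (hiu'n.neg.congr
      (fun x _ => by simp [neg_mul])) hpt1
  have hneg : (∫ x in a..b, -(u' x) * n x) = -∫ x in a..b, u' x * n x := by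
    rw [← intervalIntegral.integral_neg]
    congr 1; funext x; ring
  have h2 : (∫ x in a..b, u x * n' x) ≤ ∫ x in a..b, ((1/2) * f x + 2 * h x) :=
    intervalIntegral.integral_mono_on hab hiun'
      ((hif.const_mul _).add (hih.const_mul _)) hpt2
  have h3 : (∫ x in a..b, ((1/2) * f x + 2 * h x))
      = (1/2) * (∫ x in a..b, f x) + 2 * (∫ x in a..b, h x) := by
    rw [intervalIntegral.integral_add (hif.const_mul _) (hih.const_mul _),
      intervalIntegral.integral_const_mul, intervalIntegral.integral_const_mul]
  have hub : 0 ≤ u b * n b := by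
    have hb0 : 0 < b := lt_of_lt_of_le ha hab
    have : 0 < Real.exp (-2*b*τ)*(1+2*b*τ)/b := by positivity
    exact mul_nonneg this.le (sq_nonneg _)
  have hua : u a * n a = Real.exp (-2*a*τ)*(1+2*a*τ)/a*‖g a‖^2 := rfl
  have hA : (∫ r in a..b, f r) ≤ u a * n a - u b * n b + (∫ x in a..b, u x * n' x) := by
    have := hIBP
    linarith [h1, hneg.le, hneg.ge]
  linarith [h2, h3.le, h3.ge, hA, hub]


lemma whd_gbound (g g' : ℝ → ℂ)
    (hg : ∀ r ∈ Set.Ioi (0 : ℝ), HasDerivAt g (g' r) r)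
    (hg'c : ContinuousOn g' (Set.Ioi 0))
    (hg0 : Filter.Tendsto g (nhdsWithin 0 (Set.Ioi 0)) (nhds 0))
    (hI : IntegrableOn (fun r => ‖g' r‖^2) (Set.Ioc 0 1) volume)
    {ε : ℝ} (hε : ε ∈ Set.Ioc (0:ℝ) 1) :
    ‖g ε‖^2 ≤ ε * ∫ r in Set.Ioc (0:ℝ) ε, ‖g' r‖^2 := by
  obtain ⟨hε0, hε1⟩ := hε
  have hmeas : MeasurableSet (Set.Ioc (0:ℝ) 1) := measurableSet_Ioc
  have hsub1 : Set.Ioc (0:ℝ) ε ⊆ Set.Ioc 0 1 := Set.Ioc_subset_Ioc_right hε1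
  have hIε : IntegrableOn (fun r => ‖g' r‖^2) (Set.Ioc 0 ε) volume := hI.mono_set hsub1
  have hsm : AEStronglyMeasurable (fun r => ‖g' r‖) (volume.restrict (Set.Ioc (0:ℝ) ε)) :=
    (hg'c.norm.mono (fun x hx => hx.1)).aestronglyMeasurable measurableSet_Ioc
  -- ‖g'‖ is integrable on Ioc 0 ε
  have hI1 : IntegrableOn (fun r => ‖g' r‖) (Set.Ioc 0 ε) volume := by
    refine Integrable.mono' ((integrable_const 1).add hIε) hsm ?_
    filter_upwards with x
    have : ‖g' x‖ ≤ 1 + ‖g' x‖^2 := by nlinarith [sq_nonneg (‖g' x‖ - 1), norm_nonneg (g' x)]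
    simpa [abs_of_nonneg (norm_nonneg (g' x))] using this
  -- step 1 : ‖g ε‖ ≤ ∫_{Ioc 0 ε} ‖g'‖
  have step1 : ‖g ε‖ ≤ ∫ r in Set.Ioc (0:ℝ) ε, ‖g' r‖ := by
    have hbound : ∀ δ ∈ Set.Ioo (0:ℝ) ε, ‖g ε - g δ‖ ≤ ∫ r in Set.Ioc (0:ℝ) ε, ‖g' r‖ := by
      intro δ hδ
      have hδ0 : 0 < δ := hδ.1
      have hδε : δ ≤ ε := hδ.2.le
      have hsubδ : Set.uIcc δ ε ⊆ Set.Ioi 0 := by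
        rw [Set.uIcc_of_le hδε]
        exact fun x hx => lt_of_lt_of_le hδ0 hx.1
      have hg'int : IntervalIntegrable g' volume δ ε :=
        (hg'c.mono hsubδ).intervalIntegrable
      have hftc : ∫ r in δ..ε, g' r = g ε - g δ :=
        intervalIntegral.integral_eq_sub_of_hasDerivAt
          (fun x hx => hg x (hsubδ hx)) hg'int
      rw [← hftc]
      calc ‖∫ r in δ..ε, g' r‖ ≤ ∫ r in δ..ε, ‖g' r‖ :=
            intervalIntegral.norm_integral_le_integral_norm hδε
        _ = ∫ r in Set.Ioc δ ε, ‖g' r‖ := intervalIntegral.integral_of_le hδε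
        _ ≤ ∫ r in Set.Ioc (0:ℝ) ε, ‖g' r‖ := by
            apply setIntegral_mono_set hI1
            · filter_upwards with x using norm_nonneg _
            · exact HasSubset.Subset.eventuallyLE (Set.Ioc_subset_Ioc_left hδ0.le)
    have htd : Filter.Tendsto (fun δ => ‖g ε - g δ‖) (nhdsWithin 0 (Set.Ioi 0))
        (nhds ‖g ε‖) := by
      have : Filter.Tendsto (fun δ => g ε - g δ) (nhdsWithin 0 (Set.Ioi 0))
          (nhds (g ε - 0)) := Filter.Tendsto.sub tendsto_const_nhds hg0
      simpa using this.norm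
    refine le_of_tendsto htd ?_
    filter_upwards [Ioo_mem_nhdsGT hε0] with δ hδ using hbound δ hδ
  -- step 2 : Cauchy-Schwarz
  have hnn : 0 ≤ ∫ r in Set.Ioc (0:ℝ) ε, ‖g' r‖ :=
    setIntegral_nonneg measurableSet_Ioc (fun x _ => norm_nonneg _)
  have hCS : (∫ r in Set.Ioc (0:ℝ) ε, ‖g' r‖)^2
      ≤ ε * ∫ r in Set.Ioc (0:ℝ) ε, ‖g' r‖^2 := by
    have hfin : volume (Set.Ioc (0:ℝ) ε) < ⊤ := by
      rw [Real.volume_Ioc]; exact ENNReal.ofReal_lt_top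
    haveI : IsFiniteMeasure (volume.restrict (Set.Ioc (0:ℝ) ε)) :=
      ⟨by rwa [Measure.restrict_apply_univ]⟩
    have hpq : Real.HolderConjugate 2 2 := by rw [Real.holderConjugate_iff]; norm_num
    have hmem1 : MemLp (fun _ : ℝ => (1:ℝ)) (ENNReal.ofReal 2)
        (volume.restrict (Set.Ioc (0:ℝ) ε)) := memLp_const 1
    have hmemf : MemLp (fun r => ‖g' r‖) (ENNReal.ofReal 2)
        (volume.restrict (Set.Ioc (0:ℝ) ε)) := by
      rw [show ENNReal.ofReal 2 = 2 by norm_num]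
      refine (memLp_two_iff_integrable_sq hsm).mpr ?_
      refine hIε.congr ?_
      filter_upwards with x using by ring
    have hH := integral_mul_le_Lp_mul_Lq_of_nonneg hpq
      (μ := volume.restrict (Set.Ioc (0:ℝ) ε))
      (f := fun r => ‖g' r‖) (g := fun _ => 1)
      (by filter_upwards with x using norm_nonneg _)
      (by filter_upwards with x using zero_le_one) hmemf hmem1
    simp only [mul_one, Real.one_rpow] at hH
    have hrw2 : ∀ y : ℝ, y ^ (2:ℝ) = y ^ 2 := fun y => by
      rw [show (2:ℝ) = ((2:ℕ):ℝ) by norm_num, Real.rpow_natCast]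
    have hε' : (∫ (_ : ℝ) in Set.Ioc (0:ℝ) ε, (1:ℝ)) = ε := by
      simp [Real.volume_Ioc, ENNReal.toReal_ofReal hε0.le, hε0.le]
    rw [hε'] at hH
    have hI2nn : 0 ≤ ∫ r in Set.Ioc (0:ℝ) ε, ‖g' r‖^2 :=
      setIntegral_nonneg measurableSet_Ioc (fun x _ => sq_nonneg _)
    have hH' : ∫ r in Set.Ioc (0:ℝ) ε, ‖g' r‖
        ≤ (∫ r in Set.Ioc (0:ℝ) ε, ‖g' r‖^2) ^ ((1:ℝ)/2) * ε ^ ((1:ℝ)/2) := by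
      calc ∫ r in Set.Ioc (0:ℝ) ε, ‖g' r‖
          ≤ (∫ r in Set.Ioc (0:ℝ) ε, ‖g' r‖ ^ (2:ℝ)) ^ ((1:ℝ)/2) * ε ^ ((1:ℝ)/2) := hH
        _ = (∫ r in Set.Ioc (0:ℝ) ε, ‖g' r‖^2) ^ ((1:ℝ)/2) * ε ^ ((1:ℝ)/2) := by
            congr 2; exact integral_congr_ae (by filter_upwards with x using hrw2 _)
    calc (∫ r in Set.Ioc (0:ℝ) ε, ‖g' r‖)^2
        ≤ ((∫ r in Set.Ioc (0:ℝ) ε, ‖g' r‖^2) ^ ((1:ℝ)/2) * ε ^ ((1:ℝ)/2))^2 :=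
          pow_le_pow_left₀ hnn hH' 2
      _ = ε * ∫ r in Set.Ioc (0:ℝ) ε, ‖g' r‖^2 := by
          rw [mul_pow, ← Real.rpow_natCast ((∫ r in Set.Ioc (0:ℝ) ε, ‖g' r‖^2) ^ ((1:ℝ)/2)) 2,
            ← Real.rpow_natCast (ε ^ ((1:ℝ)/2)) 2, ← Real.rpow_mul hI2nn, ← Real.rpow_mul hε0.le]
          norm_num [mul_comm]
  calc ‖g ε‖^2 ≤ (∫ r in Set.Ioc (0:ℝ) ε, ‖g' r‖)^2 := pow_le_pow_left₀ (norm_nonneg _) step1 2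
    _ ≤ ε * ∫ r in Set.Ioc (0:ℝ) ε, ‖g' r‖^2 := hCS

/-- Weighted Hardy inequality with weight `w(r) = e^{−τr}(1+2rτ)^{1/2}`: for `τ > 0`
and `g : (0,∞) → ℂ` continuously differentiable with `g(r) → 0` as `r → 0⁺`,
`∫_0^∞ e^{−2rτ}(1+2rτ)|g(r)|²/r² dr ≤ 4 ∫_0^∞ e^{−2rτ}(1+2rτ)|g'(r)|² dr`
(in the extended-real sense). -/
theorem weighted_hardy_exponential (τ : ℝ) (hτ : 0 < τ) (g g' : ℝ → ℂ)
    (hg : ∀ r ∈ Set.Ioi (0 : ℝ), HasDerivAt g (g' r) r)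
    (hg'c : ContinuousOn g' (Set.Ioi 0))
    (hg0 : Filter.Tendsto g (nhdsWithin 0 (Set.Ioi 0)) (nhds 0)) :
    (∫⁻ r in Set.Ioi (0 : ℝ),
        ENNReal.ofReal (Real.exp (-2 * r * τ) * (1 + 2 * r * τ) * ‖g r‖ ^ 2 / r ^ 2))
      ≤ 4 * ∫⁻ r in Set.Ioi (0 : ℝ),
          ENNReal.ofReal (Real.exp (-2 * r * τ) * (1 + 2 * r * τ) * ‖g' r‖ ^ 2) := by
  set h : ℝ → ℝ := fun r => Real.exp (-2 * r * τ) * (1 + 2 * r * τ) * ‖g' r‖ ^ 2 with hh_def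
  set f : ℝ → ℝ := fun r => Real.exp (-2 * r * τ) * (1 + 2 * r * τ) * ‖g r‖ ^ 2 / r ^ 2
    with hf_def
  set RHS : ENNReal := ∫⁻ r in Set.Ioi (0 : ℝ), ENNReal.ofReal (h r) with hRHS_def
  by_cases hB : RHS = ⊤
  · rw [hB]
    simp [ENNReal.mul_top]
  -- basic continuity
  have hgc : ContinuousOn g (Set.Ioi 0) :=
    fun x hx => ((hg x hx).continuousAt).continuousWithinAt
  have hhc : ContinuousOn h (Set.Ioi 0) := by fun_prop
  have hfc : ContinuousOn f (Set.Ioi 0) := by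
    apply ContinuousOn.div (by fun_prop) (by fun_prop)
    exact fun x hx => pow_ne_zero 2 (ne_of_gt hx)
  have hfnn : ∀ r ∈ Set.Ioi (0:ℝ), 0 ≤ f r := by
    intro r hr
    have : (0:ℝ) < r := hr
    positivity
  have hhnn : ∀ r ∈ Set.Ioi (0:ℝ), 0 ≤ h r := by
    intro r hr
    have : (0:ℝ) < r := hr
    positivity
  -- ‖g'‖² is integrable on Ioc 0 1
  have hI : IntegrableOn (fun r => ‖g' r‖^2) (Set.Ioc 0 1) volume := by
    have hsub : Set.Ioc (0:ℝ) 1 ⊆ Set.Ioi 0 := fun x hx => hx.1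
    constructor
    · exact ((hg'c.mono hsub).norm.pow 2).aestronglyMeasurable measurableSet_Ioc
    · rw [hasFiniteIntegral_iff_norm]
      have hb : ∀ r ∈ Set.Ioc (0:ℝ) 1,
          ENNReal.ofReal ‖‖g' r‖^2‖ ≤ ENNReal.ofReal (Real.exp (2*τ)) * ENNReal.ofReal (h r) := by
        intro r hr
        rw [← ENNReal.ofReal_mul (Real.exp_pos _).le]
        apply ENNReal.ofReal_le_ofReal
        rw [Real.norm_of_nonneg (sq_nonneg _)]
        have h1 : Real.exp (-2*τ) ≤ Real.exp (-2*r*τ) := by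
          apply Real.exp_le_exp.mpr
          nlinarith [hr.1, hr.2, hτ]
        have h2 : (1:ℝ) ≤ 1 + 2*r*τ := by nlinarith [hr.1.le]
        have h3 : Real.exp (2*τ) * Real.exp (-2*τ) = 1 := by
          rw [← Real.exp_add]; norm_num
        have h4 : (1:ℝ) ≤ Real.exp (2*τ) * Real.exp (-2*r*τ) := by
          calc (1:ℝ) = Real.exp (2*τ) * Real.exp (-2*τ) := h3.symm
            _ ≤ _ := by nlinarith [Real.exp_pos (2*τ)]
        have h5 : (1:ℝ) ≤ Real.exp (2*τ) * Real.exp (-2*r*τ) * (1+2*r*τ) := by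
          nlinarith [Real.exp_pos (2*τ), Real.exp_pos (-2*r*τ)]
        show ‖g' r‖^2 ≤ Real.exp (2*τ) * (Real.exp (-2*r*τ)*(1+2*r*τ)*‖g' r‖^2)
        nlinarith [mul_le_mul_of_nonneg_right h5 (sq_nonneg ‖g' r‖)]
      calc ∫⁻ r in Set.Ioc (0:ℝ) 1, ENNReal.ofReal ‖‖g' r‖^2‖
          ≤ ∫⁻ r in Set.Ioc (0:ℝ) 1, ENNReal.ofReal (Real.exp (2*τ)) * ENNReal.ofReal (h r) := by
            apply lintegral_mono_ae
            exact (ae_restrict_iff' measurableSet_Ioc).mpr (Filter.Eventually.of_forall hb)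
        _ = ENNReal.ofReal (Real.exp (2*τ)) * ∫⁻ r in Set.Ioc (0:ℝ) 1, ENNReal.ofReal (h r) :=
            lintegral_const_mul' _ _ ENNReal.ofReal_ne_top
        _ ≤ ENNReal.ofReal (Real.exp (2*τ)) * RHS := by
            gcongr
            exact lintegral_mono_set (fun x hx => hx.1)
        _ < ⊤ := ENNReal.mul_lt_top ENNReal.ofReal_lt_top (lt_top_iff_ne_top.mpr hB)
  -- sequences
  set e : ℕ → ℝ := fun n => ((n:ℝ)+1)⁻¹ with he_def
  set R : ℕ → ℝ := fun n => (n:ℝ)+1 with hR_def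
  have hRpos : ∀ n, (0:ℝ) < R n := fun n => by positivity
  have he0 : ∀ n, 0 < e n := fun n => by positivity
  have he1 : ∀ n, e n ≤ 1 := fun n => by
    rw [he_def]
    rw [inv_le_one_iff₀]
    right; push_cast; linarith [Nat.cast_nonneg (α := ℝ) n]
  have heR : ∀ n, e n ≤ R n := fun n => le_trans (he1 n)
    (by show (1:ℝ) ≤ (n:ℝ)+1; linarith [Nat.cast_nonneg (α := ℝ) n])
  have he_anti : Antitone e := fun m k hmk => by
    apply inv_anti₀ (by positivity)
    push_cast; exact_mod_cast add_le_add_left (Nat.cast_le.mpr hmk) 1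
  have hR_mono : Monotone R := fun m k hmk => by
    simp only [hR_def]; exact_mod_cast add_le_add_left (Nat.cast_le.mpr hmk) 1
  -- K tendsto 0
  set K : ℝ → ℝ := fun t => ∫ r in Set.Ioc (0:ℝ) t, ‖g' r‖^2 with hK_def
  have hKnn : ∀ t, 0 ≤ K t := fun t =>
    setIntegral_nonneg measurableSet_Ioc (fun x _ => sq_nonneg _)
  have hK : Filter.Tendsto (fun n => K (e n)) Filter.atTop (nhds 0) := by
    have hanti : Antitone (fun n => Set.Ioc (0:ℝ) (e n)) := fun m k hmk =>
      Set.Ioc_subset_Ioc_right (he_anti hmk)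
    have hIempty : (⋂ n, Set.Ioc (0:ℝ) (e n)) = ∅ := by
      rw [Set.eq_empty_iff_forall_notMem]
      intro x hx
      simp only [Set.mem_iInter, Set.mem_Ioc] at hx
      obtain ⟨n, hn⟩ := exists_nat_one_div_lt (hx 0).1
      have := (hx n).2
      rw [one_div] at hn
      exact absurd this (not_le.mpr hn)
    have := tendsto_setIntegral_of_antitone (f := fun r => ‖g' r‖^2)
      (μ := volume) (s := fun n => Set.Ioc (0:ℝ) (e n))
      (fun i => measurableSet_Ioc) hanti
      ⟨0, hI.mono_set (Set.Ioc_subset_Ioc_right (he1 0))⟩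
    rw [hIempty] at this
    simpa using this
  -- boundary term tendsto 0
  set c : ℝ → ℝ := fun t => 2*(Real.exp (-2*t*τ)*(1+2*t*τ)/t*‖g t‖^2) with hc_def
  have hcnn : ∀ n, 0 ≤ c (e n) := fun n => by
    have := he0 n; simp only [hc_def]; positivity
  have hcK : ∀ n, c (e n) ≤ 2*((1+2*τ)*K (e n)) := by
    intro n
    set t := e n
    have ht0 : 0 < t := he0 n
    have ht1 : t ≤ 1 := he1 n
    have hgb := whd_gbound g g' hg hg'c hg0 hI ⟨ht0, ht1⟩
    have hw0 : 0 ≤ Real.exp (-2*t*τ)*(1+2*t*τ) := by positivity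
    have hwle : Real.exp (-2*t*τ)*(1+2*t*τ) ≤ 1+2*τ := by
      have h1 : Real.exp (-2*t*τ) ≤ 1 := Real.exp_le_one_iff.mpr (by nlinarith)
      have hpos : (0:ℝ) ≤ 1+2*t*τ := by nlinarith
      nlinarith [mul_le_mul_of_nonneg_right h1 hpos, mul_nonneg (sub_nonneg.mpr ht1) hτ.le]
    have e1 : Real.exp (-2*t*τ)*(1+2*t*τ)/t*‖g t‖^2
        ≤ Real.exp (-2*t*τ)*(1+2*t*τ)/t*(t*K t) :=
      mul_le_mul_of_nonneg_left hgb (by positivity)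
    have e2 : Real.exp (-2*t*τ)*(1+2*t*τ)/t*(t*K t)
        = Real.exp (-2*t*τ)*(1+2*t*τ)*K t := by field_simp
    have e3 : Real.exp (-2*t*τ)*(1+2*t*τ)*K t ≤ (1+2*τ)*K t :=
      mul_le_mul_of_nonneg_right hwle (hKnn t)
    simp only [hc_def]
    linarith
  have hc : Filter.Tendsto (fun n => c (e n)) Filter.atTop (nhds 0) := by
    have hlim : Filter.Tendsto (fun n => 2*((1+2*τ)*K (e n))) Filter.atTop (nhds 0) := by
      have := (hK.const_mul (1+2*τ)).const_mul (2:ℝ)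
      simpa using this
    exact squeeze_zero hcnn hcK hlim
  -- the supremum representation
  set a : ℕ → ENNReal := fun n =>
    ∫⁻ r in Set.Ioc (e n) (R n), ENNReal.ofReal (f r) with ha_def
  have hSsub : ∀ n, Set.Ioc (e n) (R n) ⊆ Set.Ioi 0 := fun n x hx =>
    lt_trans (he0 n) hx.1
  have hSmono : ∀ {m k}, m ≤ k → Set.Ioc (e m) (R m) ⊆ Set.Ioc (e k) (R k) :=
    fun {m k} hmk => Set.Ioc_subset_Ioc (he_anti hmk) (hR_mono hmk)
  have hLHS : (∫⁻ r in Set.Ioi (0:ℝ), ENNReal.ofReal (f r)) = ⨆ n, a n := by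
    set F : ℝ → ENNReal := fun r => ENNReal.ofReal (f r) with hF_def
    set Fn : ℕ → ℝ → ENNReal := fun n => (Set.Ioc (e n) (R n)).indicator F with hFn_def
    have hFmeas : AEMeasurable F (volume.restrict (Set.Ioi 0)) :=
      ENNReal.measurable_ofReal.comp_aemeasurable (hfc.aemeasurable measurableSet_Ioi)
    have hFn_meas : ∀ n, AEMeasurable (Fn n) (volume.restrict (Set.Ioi 0)) :=
      fun n => hFmeas.indicator measurableSet_Ioc
    have hFn_mono : ∀ x, Monotone (fun n => Fn n x) := fun x m k hmk =>
      Set.indicator_le_indicator_of_subset (hSmono hmk) (fun _ => zero_le) x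
    have key := lintegral_iSup' hFn_meas (Filter.Eventually.of_forall hFn_mono)
    have hcongr : ∀ x ∈ Set.Ioi (0:ℝ), (⨆ n, Fn n x) = F x := by
      intro x hx
      have hx0 : (0:ℝ) < x := hx
      obtain ⟨n₁, hn₁⟩ := exists_nat_one_div_lt hx0
      obtain ⟨n₂, hn₂⟩ := exists_nat_ge x
      have hmem : x ∈ Set.Ioc (e (max n₁ n₂)) (R (max n₁ n₂)) := by
        constructor
        · have : e (max n₁ n₂) ≤ e n₁ := he_anti (le_max_left _ _)
          rw [one_div] at hn₁
          push_cast at hn₁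
          exact lt_of_le_of_lt this hn₁
        · have : R n₂ ≤ R (max n₁ n₂) := hR_mono (le_max_right _ _)
          have h2 : x ≤ R n₂ := le_trans hn₂ (by simp [hR_def])
          linarith
      apply le_antisymm
      · exact iSup_le fun n => Set.indicator_le_self _ _ x
      · calc F x = Fn (max n₁ n₂) x := (Set.indicator_of_mem hmem F).symm
          _ ≤ ⨆ n, Fn n x := le_iSup (fun n => Fn n x) _
    calc (∫⁻ r in Set.Ioi (0:ℝ), F r)
        = ∫⁻ r in Set.Ioi (0:ℝ), ⨆ n, Fn n r := by
          apply lintegral_congr_ae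
          exact (ae_restrict_iff' measurableSet_Ioi).mpr
            (Filter.Eventually.of_forall (fun x hx => (hcongr x hx).symm))
      _ = ⨆ n, ∫⁻ r in Set.Ioi (0:ℝ), Fn n r := key
      _ = ⨆ n, a n := by
          congr 1
          funext n
          rw [hFn_def]
          rw [lintegral_indicator measurableSet_Ioc,
            Measure.restrict_restrict measurableSet_Ioc,
            Set.inter_eq_left.mpr (hSsub n)]
  -- the bound for each n
  have hbound : ∀ n, a n ≤ ENNReal.ofReal (c (e n)) + 4 * RHS := by
    intro n
    have hIccsub : Set.Icc (e n) (R n) ⊆ Set.Ioi 0 := fun x hx =>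
      lt_of_lt_of_le (he0 n) hx.1
    have hfint : IntegrableOn f (Set.Ioc (e n) (R n)) volume :=
      ((hfc.mono hIccsub).integrableOn_Icc).mono_set Set.Ioc_subset_Icc_self
    have hhint : IntegrableOn h (Set.Ioc (e n) (R n)) volume :=
      ((hhc.mono hIccsub).integrableOn_Icc).mono_set Set.Ioc_subset_Icc_self
    have hfae : 0 ≤ᵐ[volume.restrict (Set.Ioc (e n) (R n))] f :=
      (ae_restrict_iff' measurableSet_Ioc).mpr
        (Filter.Eventually.of_forall (fun x hx => hfnn x (hSsub n hx)))
    have hhae : 0 ≤ᵐ[volume.restrict (Set.Ioc (e n) (R n))] h :=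
      (ae_restrict_iff' measurableSet_Ioc).mpr
        (Filter.Eventually.of_forall (fun x hx => hhnn x (hSsub n hx)))
    have hhInn : 0 ≤ ∫ r in Set.Ioc (e n) (R n), h r := integral_nonneg_of_ae hhae
    have ha_eq : a n = ENNReal.ofReal (∫ r in Set.Ioc (e n) (R n), f r) :=
      (ofReal_integral_eq_lintegral_ofReal hfint hfae).symm
    have hint_eq : (∫ r in Set.Ioc (e n) (R n), f r) = ∫ r in (e n)..(R n), f r :=
      (intervalIntegral.integral_of_le (heR n)).symm
    have hinth_eq : (∫ r in (e n)..(R n), h r) = ∫ r in Set.Ioc (e n) (R n), h r :=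
      intervalIntegral.integral_of_le (heR n)
    have hwint := whd_interval τ hτ g g' hg hg'c (he0 n) (heR n)
    rw [hinth_eq] at hwint
    calc a n = ENNReal.ofReal (∫ r in Set.Ioc (e n) (R n), f r) := ha_eq
      _ ≤ ENNReal.ofReal (c (e n) + 4 * ∫ r in Set.Ioc (e n) (R n), h r) := by
          apply ENNReal.ofReal_le_ofReal
          rw [hint_eq]
          exact hwint
      _ ≤ ENNReal.ofReal (c (e n)) + ENNReal.ofReal (4 * ∫ r in Set.Ioc (e n) (R n), h r) :=
          ENNReal.ofReal_add_le
      _ = ENNReal.ofReal (c (e n)) + 4 * ENNReal.ofReal (∫ r in Set.Ioc (e n) (R n), h r) := by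
          rw [ENNReal.ofReal_mul (by norm_num : (0:ℝ) ≤ 4)]
          norm_num
      _ = ENNReal.ofReal (c (e n)) + 4 * ∫⁻ r in Set.Ioc (e n) (R n), ENNReal.ofReal (h r) := by
          rw [ofReal_integral_eq_lintegral_ofReal hhint hhae]
      _ ≤ ENNReal.ofReal (c (e n)) + 4 * RHS := by
          gcongr
          exact lintegral_mono_set (hSsub n)
  -- conclude
  have hamono : Monotone a := fun m k hmk => lintegral_mono_set (hSmono hmk)
  have hta : Filter.Tendsto a Filter.atTop (nhds (⨆ n, a n)) := tendsto_atTop_iSup hamono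
  have htb : Filter.Tendsto (fun n => ENNReal.ofReal (c (e n)) + 4 * RHS)
      Filter.atTop (nhds (0 + 4 * RHS)) := by
    refine Filter.Tendsto.add ?_ tendsto_const_nhds
    simpa using ENNReal.tendsto_ofReal hc
  have := le_of_tendsto_of_tendsto' hta htb hbound
  rw [zero_add] at this
  rw [hLHS]
  exact this
end
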